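/- arXiv:2109.09984 — 2 statements merged into one kernel-verified Lean document; each statement's English description precedes it below -/
import Mathlib

section
/- Let G be a finite group, (H,K) a generalized strong Shoda pair of G with strong inductive chain H = H_0 ≤ H_1 ≤ ⋯ ≤ H_n = G, and λ a linear character of H with kernel K. For each 0 ≤ i ≤ n−1 put C_i = Cen_{H_{i+1}}(e_ℚ(λ^{H_i})). Then ℚC_i e_ℚ(λ^{H_i}) is isomorphic to the crossed product algebra ℚH_i e_ℚ(λ^{H_i}) *^{σ_{H_i}}_{τ_{H_i}} C_i/H_i, where for each x ∈ C_i/H_i a coset representative x̄ ∈ C_i is fixed, σ_{H_i} : C_i/H_i → Aut(ℚH_i e_ℚ(λ^{H_i})) sends x to the conjugation automorphism of ℚH_i e_ℚ(λ^{H_i}) induced by x̄, and τ_{H_i}(x,y) = x̄·ȳ·(x̄ȳ)^{-1} e_ℚ(λ^{H_i}). -/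
open scoped Classical
set_option linter.unusedSectionVars false

noncomputable section

namespace PaperGSM

variable {G : Type} [Group G] [Fintype G]

/-- `Ĥ = (1/|N|) ∑_{x ∈ N} x` in the rational group algebra. -/
def hat (N : Subgroup G) : MonoidAlgebra ℚ G :=
  (Nat.card N : ℚ)⁻¹ • ∑ x : N, MonoidAlgebra.of ℚ G (x : G)

/-- conjugation of `X` by `y`, as an equivalence of the subtype. -/
def conjEquiv (X : Subgroup G) (y : G) (h : ∀ x ∈ X, y⁻¹ * x * y ∈ X)
    (h' : ∀ x ∈ X, y * x * y⁻¹ ∈ X) : X ≃ X where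
  toFun x := ⟨y⁻¹ * x * y, h x x.2⟩
  invFun x := ⟨y * x * y⁻¹, h' x x.2⟩
  left_inv x := Subtype.ext (by group)
  right_inv x := Subtype.ext (by group)

lemma sum_conj_eq (X : Subgroup G) (y : G) (h : ∀ x ∈ X, y⁻¹ * x * y ∈ X)
    (h' : ∀ x ∈ X, y * x * y⁻¹ ∈ X) :
    ∑ x : X, MonoidAlgebra.of ℚ G ((x : G) * y)
      = ∑ x : X, MonoidAlgebra.of ℚ G (y * (x : G)) := by
  apply Fintype.sum_equiv (conjEquiv X y h h')
  intro x
  have : (x : G) * y = y * ((conjEquiv X y h h') x : G) := by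
    simp only [conjEquiv, Equiv.coe_fn_mk]
    group
  rw [this]

lemma hat_comm (X Y : Subgroup G) (h : ∀ y ∈ Y, ∀ x ∈ X, y⁻¹ * x * y ∈ X) :
    hat X * hat Y = hat Y * hat X := by
  have key : (∑ x : X, MonoidAlgebra.of ℚ G (x : G)) * (∑ y : Y, MonoidAlgebra.of ℚ G (y : G))
      = (∑ y : Y, MonoidAlgebra.of ℚ G (y : G)) * (∑ x : X, MonoidAlgebra.of ℚ G (x : G)) := by
    rw [Finset.sum_mul_sum, Finset.sum_mul_sum]
    have l : ∀ (x : X) (y : Y),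
        MonoidAlgebra.of ℚ G (x : G) * MonoidAlgebra.of ℚ G (y : G)
          = MonoidAlgebra.of ℚ G ((x : G) * (y : G)) := fun x y => (map_mul _ _ _).symm
    calc ∑ x : X, ∑ y : Y, MonoidAlgebra.of ℚ G (x : G) * MonoidAlgebra.of ℚ G (y : G)
        = ∑ y : Y, ∑ x : X, MonoidAlgebra.of ℚ G ((x : G) * (y : G)) := by
          rw [Finset.sum_comm]
          exact Finset.sum_congr rfl fun y _ => Finset.sum_congr rfl fun x _ => l x y
      _ = ∑ y : Y, ∑ x : X, MonoidAlgebra.of ℚ G ((y : G) * (x : G)) := by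
          refine Finset.sum_congr rfl fun y _ => ?_
          refine sum_conj_eq X (y : G) (fun x hx => h y y.2 x hx) (fun x hx => ?_)
          have := h (y : G)⁻¹ (Y.inv_mem y.2) x hx
          simpa using this
      _ = ∑ y : Y, ∑ x : X, MonoidAlgebra.of ℚ G (y : G) * MonoidAlgebra.of ℚ G (x : G) := by
          exact Finset.sum_congr rfl fun y _ => Finset.sum_congr rfl fun x _ => map_mul (MonoidAlgebra.of ℚ G) _ _
  unfold hat
  rw [smul_mul_smul_comm, smul_mul_smul_comm, key, mul_comm ((Nat.card X : ℚ)⁻¹)]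

instance : Fintype (Subgroup G) :=
  Fintype.ofInjective (fun H : Subgroup G => (H : Set G)) fun _ _ h => SetLike.coe_injective h

/-- `N` is a normal subgroup of `B` (both given as subgroups of the ambient group `G`). -/
def NormalIn (N B : Subgroup G) : Prop :=
  N ≤ B ∧ ∀ b ∈ B, ∀ x ∈ N, b * x * b⁻¹ ∈ N

/-- `L` is a minimal normal subgroup of `H` containing `K` properly. -/
def IsMinNormalOver (H K L : Subgroup G) : Prop :=
  NormalIn L H ∧ K < L ∧ ∀ M : Subgroup G, NormalIn M H → K < M → M ≤ L → M = L

/-- `ε(H,K)`. -/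
def eps (H K : Subgroup G) : MonoidAlgebra ℚ G :=
  if H = K then hat K
  else Finset.noncommProd (Finset.univ.filter (IsMinNormalOver H K))
    (fun L => hat K - hat L) (by
      intro L hL M hM _
      simp only [Finset.coe_filter, Set.mem_setOf_eq, Finset.mem_univ, true_and] at hL hM
      have hKL : K ≤ L := le_of_lt hL.2.1
      have hKH : K ≤ H := hKL.trans hL.1.1
      have normconj : ∀ (A : Subgroup G), NormalIn A H → ∀ y ∈ K, ∀ x ∈ A, y⁻¹ * x * y ∈ A := by
        intro A hA y hy x hx
        have := hA.2 y⁻¹ (H.inv_mem (hKH hy)) x hx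
        simpa using this
      have cKK : Commute (hat K) (hat K) := Commute.refl _
      have cKL : Commute (hat K) (hat L) :=
        (hat_comm L K (normconj L hL.1)).symm
      have cKM : Commute (hat K) (hat M) :=
        (hat_comm M K (normconj M hM.1)).symm
      have cLM : Commute (hat L) (hat M) := by
        refine hat_comm L M ?_
        intro y hy x hx
        have := hL.1.2 y⁻¹ (H.inv_mem (hM.1.1 hy)) x hx
        simpa using this
      exact (cKK.sub_right cKM).sub_left (cKL.symm.sub_right cLM))

/-- conjugation of an element of the group algebra by a group element. -/
def conjEl (g : G) (α : MonoidAlgebra ℚ G) : MonoidAlgebra ℚ G :=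
  MonoidAlgebra.of ℚ G g * α * MonoidAlgebra.of ℚ G g⁻¹

/-- `e(B,H,K)`: the sum of the distinct `B`-conjugates of `ε(H,K)`. -/
def eGHK (B H K : Subgroup G) : MonoidAlgebra ℚ G :=
  ∑ a ∈ Finset.image (fun b : B => conjEl (b : G) (eps H K)) Finset.univ, a


/-- linear extension of a character to the rational group algebra, valued in `ℂ`. -/
def extChar {Γ : Type*} [Group Γ] [Fintype Γ] (χ : Γ → ℂ) (α : MonoidAlgebra ℚ Γ) : ℂ :=
  ∑ g : Γ, (α.coeff g : ℂ) * χ g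

/-- `e` is a primitive central idempotent of the rational group algebra. -/
def IsPCI {Γ : Type*} [Group Γ] (e : MonoidAlgebra ℚ Γ) : Prop :=
  (∀ α, e * α = α * e) ∧ e * e = e ∧ e ≠ 0 ∧
    ∀ a b : MonoidAlgebra ℚ Γ, (∀ α, a * α = α * a) → (∀ α, b * α = α * b) →
      a * a = a → b * b = b → a * b = 0 → a + b = e → a = 0 ∨ b = 0

/-- `e_ℚ(χ)`: the primitive central idempotent of `ℚΓ` associated to the irreducible
character `χ`, i.e. the unique primitive central idempotent on which `χ` does not vanish. -/
def eQchar {Γ : Type*} [Group Γ] [Fintype Γ] (χ : Γ → ℂ) : MonoidAlgebra ℚ Γ :=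
  if h : ∃ e, IsPCI e ∧ extChar χ e ≠ 0 then h.choose else 0

/-- the embedding `ℚB → ℚG` for a subgroup `B` of `G`. -/
def emb (B : Subgroup G) : MonoidAlgebra ℚ B →+* MonoidAlgebra ℚ G :=
  MonoidAlgebra.mapDomainRingHom ℚ B.subtype

/-- the induced character `χ^Γ` of a character `χ` of a subgroup `N` of `Γ`. -/
def indChar {Γ : Type*} [Group Γ] [Fintype Γ] (N : Subgroup Γ) (χ : N → ℂ) : Γ → ℂ :=
  fun g => (Nat.card N : ℂ)⁻¹ * ∑ x : Γ, if h : x * g * x⁻¹ ∈ N then χ ⟨x * g * x⁻¹, h⟩ else 0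

/-- `λ` is a linear character of `H` with kernel `K`. -/
def IsLinCharKer (H K : Subgroup G) (lam : H →* ℂ) : Prop :=
  K ≤ H ∧ ∀ h : H, lam h = 1 ↔ (h : G) ∈ K

/-- given a linear character `lam` of `H ≤ G` and `H ≤ B`, the induced character `λ^B`
of the subgroup `B`. -/
def lamChar {H : Subgroup G} (lam : H →* ℂ) (B : Subgroup G) : B → ℂ :=
  indChar (H.subgroupOf B) (fun y => lam ⟨((y : B) : G), y.2⟩)

/-- `e_ℚ(λ^B)` viewed as an element of `ℚG`. -/
def eQ {H : Subgroup G} (lam : H →* ℂ) (B : Subgroup G) : MonoidAlgebra ℚ G :=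
  emb B (eQchar (lamChar lam B))

/-- `Cen_B(e)`: the centralizer of an element `e` of `ℚG` inside the subgroup `B`. -/
def cen (B : Subgroup G) (e : MonoidAlgebra ℚ G) : Subgroup G where
  carrier := {g | g ∈ B ∧ MonoidAlgebra.of ℚ G g * e = e * MonoidAlgebra.of ℚ G g}
  one_mem' := ⟨B.one_mem, by rw [map_one, one_mul, mul_one]⟩
  mul_mem' := by
    rintro a b ⟨haB, ha⟩ ⟨hbB, hb⟩
    refine ⟨B.mul_mem haB hbB, ?_⟩
    rw [map_mul, mul_assoc, hb, ← mul_assoc, ha, mul_assoc]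
  inv_mem' := by
    rintro a ⟨haB, ha⟩
    refine ⟨B.inv_mem haB, ?_⟩
    have h2 : MonoidAlgebra.of ℚ G a * MonoidAlgebra.of ℚ G a⁻¹ = 1 := by
      rw [← map_mul, mul_inv_cancel, map_one]
    have h1 : MonoidAlgebra.of ℚ G a⁻¹ * MonoidAlgebra.of ℚ G a = 1 := by
      rw [← map_mul, inv_mul_cancel, map_one]
    have hu : Commute ((Units.mk (MonoidAlgebra.of ℚ G a)
        (MonoidAlgebra.of ℚ G a⁻¹) h2 h1 : (MonoidAlgebra ℚ G)ˣ) : MonoidAlgebra ℚ G) e := ha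
    exact hu.units_inv_left

/-- the component `ℚB·e` of the group algebra, as a non-unital subring of `ℚG`. -/
def compIn (B : Subgroup G) (e : MonoidAlgebra ℚ G) : NonUnitalSubring (MonoidAlgebra ℚ G) :=
  NonUnitalSubring.closure (Set.range fun β : MonoidAlgebra ℚ B => emb B β * e)

/-- the center of the component `ℚB·e`, as a non-unital subring of `ℚG`. -/
def centerCompNUS (B : Subgroup G) (e : MonoidAlgebra ℚ G) :
    NonUnitalSubring (MonoidAlgebra ℚ G) where
  carrier := {α | α ∈ compIn B e ∧ ∀ γ ∈ compIn B e, α * γ = γ * α}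
  zero_mem' := ⟨zero_mem _, fun γ _ => by rw [zero_mul, mul_zero]⟩
  add_mem' := by
    rintro a b ⟨ha, ha'⟩ ⟨hb, hb'⟩
    exact ⟨add_mem ha hb, fun γ hγ => by rw [add_mul, mul_add, ha' γ hγ, hb' γ hγ]⟩
  neg_mem' := by
    rintro a ⟨ha, ha'⟩
    exact ⟨neg_mem ha, fun γ hγ => by rw [neg_mul, mul_neg, ha' γ hγ]⟩
  mul_mem' := by
    rintro a b ⟨ha, ha'⟩ ⟨hb, hb'⟩
    refine ⟨mul_mem ha hb, fun γ hγ => ?_⟩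
    rw [mul_assoc, hb' γ hγ, ← mul_assoc, ha' γ hγ, mul_assoc]

lemma conjEl_add (g : G) (α β : MonoidAlgebra ℚ G) :
    conjEl g (α + β) = conjEl g α + conjEl g β := by
  unfold conjEl; rw [mul_add, add_mul]

lemma conjEl_mul (g : G) (α β : MonoidAlgebra ℚ G) :
    conjEl g (α * β) = conjEl g α * conjEl g β := by
  unfold conjEl
  have h1 : MonoidAlgebra.of ℚ G g⁻¹ * MonoidAlgebra.of ℚ G g = 1 := by
    rw [← map_mul, inv_mul_cancel, map_one]
  calc MonoidAlgebra.of ℚ G g * (α * β) * MonoidAlgebra.of ℚ G g⁻¹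
      = MonoidAlgebra.of ℚ G g * α * ((MonoidAlgebra.of ℚ G g⁻¹ * MonoidAlgebra.of ℚ G g) *
        (β * MonoidAlgebra.of ℚ G g⁻¹)) := by rw [h1]; noncomm_ring
    _ = MonoidAlgebra.of ℚ G g * α * MonoidAlgebra.of ℚ G g⁻¹ *
        (MonoidAlgebra.of ℚ G g * β * MonoidAlgebra.of ℚ G g⁻¹) := by noncomm_ring

/-- the fixed points of the conjugation action of (members of) `C` on the center of the
component `ℚB·e`, as a non-unital subring of `ℚG`. -/
def fixedCenter (B : Subgroup G) (e : MonoidAlgebra ℚ G) (C : Subgroup G) :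
    NonUnitalSubring (MonoidAlgebra ℚ G) where
  carrier := {α | α ∈ centerCompNUS B e ∧ ∀ x ∈ C, conjEl x α = α}
  zero_mem' := ⟨zero_mem _, fun x _ => by unfold conjEl; rw [mul_zero, zero_mul]⟩
  add_mem' := by
    rintro a b ⟨ha, ha'⟩ ⟨hb, hb'⟩
    exact ⟨add_mem ha hb, fun x hx => by rw [conjEl_add, ha' x hx, hb' x hx]⟩
  neg_mem' := by
    rintro a ⟨ha, ha'⟩
    refine ⟨neg_mem ha, fun x hx => ?_⟩
    have : conjEl x (-a) = - conjEl x a := by unfold conjEl; rw [mul_neg, neg_mul]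
    rw [this, ha' x hx]
  mul_mem' := by
    rintro a b ⟨ha, ha'⟩ ⟨hb, hb'⟩
    exact ⟨mul_mem ha hb, fun x hx => by rw [conjEl_mul, ha' x hx, hb' x hx]⟩

/-- `(H,K)` is a Shoda pair of `G`. -/
def IsShodaPair (H K : Subgroup G) : Prop :=
  K ≤ H ∧ (∀ h ∈ H, ∀ x ∈ K, h * x * h⁻¹ ∈ K) ∧
    (∃ h ∈ H, ∀ x ∈ H, ∃ n : ℤ, (h ^ n)⁻¹ * x ∈ K) ∧
    ∀ g : G, (∀ h ∈ H, h⁻¹ * g⁻¹ * h * g ∈ H → h⁻¹ * g⁻¹ * h * g ∈ K) → g ∈ H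

/-- `c` is a strong inductive chain from `H` to `G` (with respect to the linear
character `lam` of `H`). -/
def IsStrongInductiveChain (H : Subgroup G) (lam : H →* ℂ) {n : ℕ}
    (c : Fin (n + 1) → Subgroup G) : Prop :=
  c 0 = H ∧ c (Fin.last n) = ⊤ ∧ Monotone c ∧
    ∀ i : Fin n,
      NormalIn (c i.castSucc) (cen (c i.succ) (eQ lam (c i.castSucc))) ∧
      ∀ x ∈ c i.succ, ∀ y ∈ c i.succ,
        conjEl x (eQ lam (c i.castSucc)) ≠ conjEl y (eQ lam (c i.castSucc)) →
        conjEl x (eQ lam (c i.castSucc)) * conjEl y (eQ lam (c i.castSucc)) = 0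

/-- `(H,K)` is a generalized strong Shoda pair of `G`, witnessed by the linear character
`lam` of `H` with kernel `K`. -/
def IsGSSPwith (H K : Subgroup G) (lam : H →* ℂ) : Prop :=
  IsShodaPair H K ∧ IsLinCharKer H K lam ∧
    ∃ (n : ℕ) (c : Fin (n + 1) → Subgroup G), IsStrongInductiveChain H lam c

/-- `(H,K)` is a generalized strong Shoda pair of `G`. -/
def IsGSSP (H K : Subgroup G) : Prop :=
  ∃ lam : H →* ℂ, IsGSSPwith H K lam

/-- `χ` is an irreducible (complex) character of `Γ`. -/
def IsIrrChar (Γ : Type) [Group Γ] (χ : Γ → ℂ) : Prop :=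
  ∃ V : FDRep ℂ Γ, CategoryTheory.Simple V ∧ V.character = χ

/-- `Γ` is a monomial group. -/
def IsMonomialGroup (Γ : Type) [Group Γ] [Fintype Γ] : Prop :=
  ∀ χ : Γ → ℂ, IsIrrChar Γ χ →
    ∃ (N : Subgroup Γ) (lam : N →* ℂ), χ = indChar N fun h => lam h

/-- `G` is a generalized strongly monomial group. -/
def IsGenStronglyMonomial (G : Type) [Group G] [Fintype G] : Prop :=
  ∀ χ : G → ℂ, IsIrrChar G χ →
    ∃ (H K : Subgroup G) (lam : H →* ℂ), IsGSSPwith H K lam ∧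
      χ = indChar H fun h => lam h

/-- `A` is a subnormal subgroup of `G`. -/
def Subnormal (A : Subgroup G) : Prop :=
  ∃ (n : ℕ) (c : Fin (n + 1) → Subgroup G), c 0 = A ∧ c (Fin.last n) = ⊤ ∧
    ∀ i : Fin n, NormalIn (c i.castSucc) (c i.succ)

/-- the Bass unit (Bass cyclic unit) `u_{k,m}(g)`, written in `ℚG` (it has integral
coefficients when `k^m ≡ 1 mod |g|`). -/
def bassQ (g : G) (k m : ℕ) : MonoidAlgebra ℚ G :=
  (∑ i ∈ Finset.range k, MonoidAlgebra.of ℚ G g ^ i) ^ m +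
    (((1 : ℚ) - (k : ℚ) ^ m) / (orderOf g : ℚ)) •
      ∑ i ∈ Finset.range (orderOf g), MonoidAlgebra.of ℚ G g ^ i

/-- the integral group ring `ℤB`, as a subring of `ℚG`. -/
def intRing (B : Subgroup G) : Subring (MonoidAlgebra ℚ G) :=
  Subring.closure (Set.range fun b : B => MonoidAlgebra.of ℚ G (b : G))

/-- `α` is a unit of the integral group ring `ℤB`. -/
def IsUnitOfZ (B : Subgroup G) (α : MonoidAlgebra ℚ G) : Prop :=
  α ∈ intRing B ∧ ∃ β ∈ intRing B, α * β = 1 ∧ β * α = 1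

/-- `Z(U(ℤB))`: the group of central units of `ℤB`, as a subgroup of `(ℚG)ˣ`. -/
def centralZUnits (B : Subgroup G) : Subgroup (MonoidAlgebra ℚ G)ˣ where
  carrier := {u | (u : MonoidAlgebra ℚ G) ∈ intRing B ∧
    ((u⁻¹ : (MonoidAlgebra ℚ G)ˣ) : MonoidAlgebra ℚ G) ∈ intRing B ∧
    ∀ x ∈ intRing B, (u : MonoidAlgebra ℚ G) * x = x * u}
  one_mem' := ⟨one_mem _, by rw [inv_one]; exact ⟨one_mem _, fun x _ => by rw [Units.val_one, one_mul, mul_one]⟩⟩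
  mul_mem' := by
    rintro a b ⟨ha1, ha2, ha3⟩ ⟨hb1, hb2, hb3⟩
    refine ⟨by rw [Units.val_mul]; exact mul_mem ha1 hb1, ?_, ?_⟩
    · rw [mul_inv_rev, Units.val_mul]; exact mul_mem hb2 ha2
    · intro x hx
      rw [Units.val_mul, mul_assoc, hb3 x hx, ← mul_assoc, ha3 x hx, mul_assoc]
  inv_mem' := by
    rintro a ⟨ha1, ha2, ha3⟩
    refine ⟨ha2, by rw [inv_inv]; exact ha1, fun x hx => ?_⟩
    exact Commute.units_inv_left (ha3 x hx)

/-- the element `1 - M̂ + u_{k,m}(g)·M̂` of `ℚG`. -/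
def genBassElt (M : Subgroup G) (g : G) (k m : ℕ) : MonoidAlgebra ℚ G :=
  1 - hat M + bassQ g k m * hat M

/-- `u` is a generalized Bass unit of `ℤB` based on some `g ∈ B` and the subgroup `M`:
it is the minimal positive power of `1 - M̂ + u_{k,m}(g)·M̂` which is a unit of `ℤB`. -/
def IsGenBassUnitOf (B M : Subgroup G) (u : (MonoidAlgebra ℚ G)ˣ) : Prop :=
  ∃ g ∈ B, ∃ k m nn : ℕ, 0 < k ∧ 0 < m ∧ 0 < nn ∧ k ^ m ≡ 1 [MOD orderOf g] ∧
    (u : MonoidAlgebra ℚ G) = genBassElt M g k m ^ nn ∧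
    IsUnitOfZ B (u : MonoidAlgebra ℚ G) ∧
    ∀ j : ℕ, 0 < j → j < nn → ¬ IsUnitOfZ B (genBassElt M g k m ^ j)

/-- `u` is a Bass unit of `ℤG`. -/
def IsBassUnit (u : (MonoidAlgebra ℚ G)ˣ) : Prop :=
  ∃ (g : G) (k m : ℕ), 0 < k ∧ 0 < m ∧ k ^ m ≡ 1 [MOD orderOf g] ∧
    (u : MonoidAlgebra ℚ G) = bassQ g k m

/-- a (finitely generated) group `M` has (torsion-free) rank `r` iff it contains a free
abelian subgroup of rank `r` of finite index. -/
def HasRank (M : Type*) [Group M] (r : ℕ) : Prop :=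
  ∃ f : Multiplicative (Fin r → ℤ) →* M, Function.Injective f ∧ f.range.index ≠ 0

/-- `(H,K)` realizes the primitive central idempotent `e` of `ℚG`. -/
def RealizesIdem (H K : Subgroup G) (e : MonoidAlgebra ℚ G) : Prop :=
  ∃ lam : H →* ℂ, IsLinCharKer H K lam ∧ eQ lam ⊤ = e

/-- two pairs of subgroups realize the same primitive central idempotent of `ℚG`. -/
def SameIdem (p q : Subgroup G × Subgroup G) : Prop :=
  ∃ e, RealizesIdem p.1 p.2 e ∧ RealizesIdem q.1 q.2 e

/-- `S` is a complete and irredundant set of generalized strong Shoda pairs of `G`. -/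
def IsCompleteIrredundantGSSP (S : Finset (Subgroup G × Subgroup G)) : Prop :=
  (∀ p ∈ S, IsGSSP p.1 p.2) ∧
  (∀ H K : Subgroup G, IsGSSP H K → ∃ q ∈ S, SameIdem (H, K) q) ∧
  (∀ p ∈ S, ∀ q ∈ S, SameIdem p q → p = q)

/-- the center of the component `ℚG·e` is a totally real field: every embedding of it
into `ℂ` has real image. -/
def IsTotallyRealCenter (B : Subgroup G) (e : MonoidAlgebra ℚ G) : Prop :=
  ∀ f : centerCompNUS B e →ₙ+* ℂ, f ≠ 0 → ∀ α, (f α).im = 0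

/-- `T` is a right transversal of `C` in `B`. -/
def IsRightTransversal (C B : Subgroup G) (T : Finset G) : Prop :=
  (T : Set G) ⊆ (B : Set G) ∧ ∀ b ∈ B, ∃! t, t ∈ T ∧ b * t⁻¹ ∈ C

/-- `x^g = g⁻¹ x g`. -/
def zconj (g : G) (α : MonoidAlgebra ℚ G) : MonoidAlgebra ℚ G :=
  MonoidAlgebra.of ℚ G g⁻¹ * α * MonoidAlgebra.of ℚ G g

/-- `∏_{c ∈ C} α^c`. -/
def innerProd (C : Subgroup G) (α : MonoidAlgebra ℚ G) : MonoidAlgebra ℚ G :=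
  ((Finset.univ : Finset C).toList.map fun c => zconj (c : G) α).prod

/-- `∏_{t ∈ T} α^t`. -/
def outerProd (T : Finset G) (α : MonoidAlgebra ℚ G) : MonoidAlgebra ℚ G :=
  (T.toList.map fun t => zconj t α).prod

/-- the iterated construction `z^{N}(u)` along a list of pairs (centralizer, transversal). -/
def zIterAux : List (Subgroup G × Finset G) → MonoidAlgebra ℚ G → MonoidAlgebra ℚ G
  | [], α => α
  | p :: rest, α => zIterAux rest (outerProd p.2 (innerProd p.1 α))

/-- the iterated construction `c^{N}(u)` along a list of transversals. -/
def cIterAux : List (Finset G) → MonoidAlgebra ℚ G → MonoidAlgebra ℚ G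
  | [], α => α
  | T :: rest, α => cIterAux rest (outerProd T α)



section AuxGSSP

open MonoidAlgebra

lemma eQchar_mul_self {Γ : Type*} [Group Γ] [Fintype Γ] (χ : Γ → ℂ) :
    eQchar χ * eQchar χ = eQchar χ := by
  unfold eQchar
  split_ifs with h
  · exact h.choose_spec.1.2.1
  · rw [mul_zero]

lemma eQ_mul_self {H : Subgroup G} (lam : H →* ℂ) (B : Subgroup G) :
    eQ lam B * eQ lam B = eQ lam B := by
  unfold eQ
  rw [← map_mul, eQchar_mul_self]

lemma emb_apply (B : Subgroup G) (β : MonoidAlgebra ℚ B) :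
    emb B β = MonoidAlgebra.mapDomain B.subtype β := rfl

lemma emb_single (B : Subgroup G) (x : B) (r : ℚ) :
    emb B (MonoidAlgebra.single x r) = MonoidAlgebra.single (x : G) r := by
  exact (emb_apply B _).trans MonoidAlgebra.mapDomain_single

lemma emb_eq_sum (B : Subgroup G) (β : MonoidAlgebra ℚ B) :
    emb B β = ∑ x : B, MonoidAlgebra.single (x : G) (β.coeff x) := by
  have hβ : β = ∑ x : B, MonoidAlgebra.single x (β.coeff x) := by
    ext y; simp [MonoidAlgebra.coeff_sum, Finsupp.finset_sum_apply, Finsupp.single_apply]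
  conv_lhs => rw [hβ]
  rw [map_sum]
  exact Finset.sum_congr rfl fun x _ => emb_single B x (β.coeff x)

lemma single_mul_mem_compIn (B : Subgroup G) (e : MonoidAlgebra ℚ G) {x : G} (hx : x ∈ B)
    (r : ℚ) : MonoidAlgebra.single x r * e ∈ compIn B e := by
  apply NonUnitalSubring.subset_closure
  refine ⟨MonoidAlgebra.single (⟨x, hx⟩ : B) r, ?_⟩
  show emb B (MonoidAlgebra.single (⟨x, hx⟩ : B) r) * e = MonoidAlgebra.single x r * e
  rw [emb_single]

lemma compIn_mul_idem (B : Subgroup G) (e : MonoidAlgebra ℚ G) (he : e * e = e) :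
    ∀ α ∈ compIn B e, α * e = α := by
  intro α hα
  induction hα using NonUnitalSubring.closure_induction with
  | mem x hx =>
      obtain ⟨β, rfl⟩ := hx
      show emb B β * e * e = emb B β * e
      rw [mul_assoc, he]
  | zero => rw [zero_mul]
  | add x y _ _ hx hy => rw [add_mul, hx, hy]
  | neg x _ hx => rw [neg_mul, hx]
  | mul x y _ _ _ hy => rw [mul_assoc, hy]

lemma compIn_mono {B B' : Subgroup G} (h : B ≤ B') (e : MonoidAlgebra ℚ G) :
    compIn B e ≤ compIn B' e := by
  unfold compIn
  rw [NonUnitalSubring.closure_le]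
  rintro _ ⟨β, rfl⟩
  show emb B β * e ∈ compIn B' e
  rw [emb_eq_sum, Finset.sum_mul]
  exact sum_mem fun x _ => single_mul_mem_compIn B' e (h x.2) _

lemma compIn_exists_emb (B : Subgroup G) (δ : MonoidAlgebra ℚ B) :
    ∀ α ∈ compIn B (emb B δ), ∃ γ, emb B γ = α := by
  intro α hα
  induction hα using NonUnitalSubring.closure_induction with
  | mem x hx =>
      obtain ⟨β, rfl⟩ := hx
      exact ⟨β * δ, map_mul _ _ _⟩
  | zero => exact ⟨0, map_zero _⟩
  | add x y _ _ hx hy =>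
      obtain ⟨a, rfl⟩ := hx; obtain ⟨b, rfl⟩ := hy; exact ⟨a + b, map_add _ _ _⟩
  | neg x _ hx => obtain ⟨a, rfl⟩ := hx; exact ⟨-a, map_neg _ _⟩
  | mul x y _ _ hx hy =>
      obtain ⟨a, rfl⟩ := hx; obtain ⟨b, rfl⟩ := hy; exact ⟨a * b, map_mul _ _ _⟩

lemma compIn_support (B : Subgroup G) (δ : MonoidAlgebra ℚ B) :
    ∀ α ∈ compIn B (emb B δ), ∀ x : G, α.coeff x ≠ 0 → x ∈ B := by
  intro α hα x hx
  obtain ⟨γ, rfl⟩ := compIn_exists_emb B δ α hα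
  rw [emb_apply] at hx
  have hmem : x ∈ (Finsupp.mapDomain B.subtype γ.coeff).support := Finsupp.mem_support_iff.mpr hx
  have h2 := Finsupp.mapDomain_support hmem
  obtain ⟨y, -, rfl⟩ := Finset.mem_image.mp h2
  exact y.2

lemma conjEl_sum {ι : Type*} (g : G) (s : Finset ι) (f : ι → MonoidAlgebra ℚ G) :
    conjEl g (∑ j ∈ s, f j) = ∑ j ∈ s, conjEl g (f j) := by
  unfold conjEl
  rw [Finset.mul_sum, Finset.sum_mul]

lemma conjEl_single (g h : G) (r : ℚ) :
    conjEl g (MonoidAlgebra.single h r) = MonoidAlgebra.single (g * h * g⁻¹) r := by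
  unfold conjEl
  rw [MonoidAlgebra.of_apply, MonoidAlgebra.of_apply, MonoidAlgebra.single_mul_single,
    MonoidAlgebra.single_mul_single, one_mul, mul_one]

lemma conjEl_neg (g : G) (α : MonoidAlgebra ℚ G) : conjEl g (-α) = - conjEl g α := by
  unfold conjEl; rw [mul_neg, neg_mul]

lemma conjEl_zero (g : G) : conjEl g (0 : MonoidAlgebra ℚ G) = 0 := by
  unfold conjEl; rw [mul_zero, zero_mul]

end AuxGSSP

/-- For a generalized strong Shoda pair `(H,K)` of `G` with strong inductive
chain `H = H_0 ≤ ⋯ ≤ H_n = G`, the algebra `ℚC_i e_ℚ(λ^{H_i})` is isomorphic to the crossed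
product `ℚH_i e_ℚ(λ^{H_i}) *^σ_τ C_i/H_i`. -/
theorem component_iso_crossed_product
    (G : Type) [Group G] [Fintype G] (H K : Subgroup G) (lam : H →* ℂ)
    (hSP : IsShodaPair H K) (hker : IsLinCharKer H K lam)
    {n : ℕ} (c : Fin (n + 1) → Subgroup G) (hchain : IsStrongInductiveChain H lam c)
    (i : Fin n)
    (hN : ((c i.castSucc).subgroupOf (cen (c i.succ) (eQ lam (c i.castSucc)))).Normal) :
    haveI := hN
    haveI : Fintype ((cen (c i.succ) (eQ lam (c i.castSucc))) ⧸
        (c i.castSucc).subgroupOf (cen (c i.succ) (eQ lam (c i.castSucc)))) :=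
      Fintype.ofFinite _
    ∀ rep : ((cen (c i.succ) (eQ lam (c i.castSucc))) ⧸
          (c i.castSucc).subgroupOf (cen (c i.succ) (eQ lam (c i.castSucc)))) →
        (cen (c i.succ) (eQ lam (c i.castSucc))),
      (∀ q, QuotientGroup.mk (rep q) = q) →
      -- `e = e_ℚ(λ^{H_i})`, `σ_x` is conjugation by the representative `x̄`, and
      -- `τ(x,y) = x̄ ȳ (x̄ȳ)⁻¹ e`; `Ψ f = ∑ r_x u_x` realizes the crossed product
      let e := eQ lam (c i.castSucc)
      let σ := fun q (α : MonoidAlgebra ℚ G) => conjEl ((rep q : G)) α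
      let τ := fun q q' => MonoidAlgebra.of ℚ G ((rep q : G) * (rep q' : G) * (rep (q * q') : G)⁻¹) * e
      let Ψ := fun f : _ → MonoidAlgebra ℚ G => ∑ q, f q * MonoidAlgebra.of ℚ G (rep q : G)
      -- `Ψ` is an additive bijection from `⊕_x (ℚH_i e) u_x` onto `ℚC_i e` ...
      (∀ f, (∀ q, f q ∈ compIn (c i.castSucc) e) → Ψ f ∈ compIn (cen (c i.succ) e) e) ∧
      (∀ f g, (∀ q, f q ∈ compIn (c i.castSucc) e) → (∀ q, g q ∈ compIn (c i.castSucc) e) →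
        Ψ f = Ψ g → f = g) ∧
      (∀ α ∈ compIn (cen (c i.succ) e) e, ∃ f, (∀ q, f q ∈ compIn (c i.castSucc) e) ∧ Ψ f = α) ∧
      -- ... which transports multiplication to the crossed product multiplication
      (∀ f g, (∀ q, f q ∈ compIn (c i.castSucc) e) → (∀ q, g q ∈ compIn (c i.castSucc) e) →
        Ψ f * Ψ g = Ψ fun q => ∑ p ∈ Finset.univ.filter (fun p : _ × _ => p.1 * p.2 = q),
          f p.1 * σ p.1 (g p.2) * τ p.1 p.2) := by
  intro rep hrep e σ τ Ψ
  letI := hN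
  letI instF : Fintype ((cen (c i.succ) (eQ lam (c i.castSucc))) ⧸
      (c i.castSucc).subgroupOf (cen (c i.succ) (eQ lam (c i.castSucc)))) :=
    Fintype.ofFinite _
  obtain ⟨hc0, hclast, hmono, hstep⟩ := hchain
  obtain ⟨⟨hHC, hnorm⟩, horth⟩ := hstep i
  have he : e * e = e := eQ_mul_self lam (c i.castSucc)
  have hcen : ∀ x : (cen (c i.succ) e),
      MonoidAlgebra.of ℚ G (x : G) * e = e * MonoidAlgebra.of ℚ G (x : G) := fun x => x.2.2
  have habs : ∀ α ∈ compIn (c i.castSucc) e, α * e = α :=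
    compIn_mul_idem (c i.castSucc) e he
  have hsupp : ∀ α ∈ compIn (c i.castSucc) e, ∀ x : G, α.coeff x ≠ 0 → x ∈ c i.castSucc :=
    compIn_support (c i.castSucc) (eQchar (lamChar lam (c i.castSucc)))
  have hcoset : ∀ (x : cen (c i.succ) e) q, QuotientGroup.mk x = q →
      (x : G) * (rep q : G)⁻¹ ∈ c i.castSucc := by
    intro x q hq
    have h0 : QuotientGroup.mk (rep q) = QuotientGroup.mk x := (hrep q).trans hq.symm
    have h1 : ((rep q)⁻¹ * x : cen (c i.succ) e) ∈
        (c i.castSucc).subgroupOf (cen (c i.succ) e) := QuotientGroup.eq.mp h0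
    rw [Subgroup.mem_subgroupOf] at h1
    have h2 : ((rep q : G))⁻¹ * (x : G) ∈ c i.castSucc := h1
    have h3 := hnorm (rep q : G) (rep q).2 _ h2
    have h4 : (rep q : G) * ((rep q : G)⁻¹ * (x : G)) * (rep q : G)⁻¹
        = (x : G) * (rep q : G)⁻¹ := by group
    rwa [h4] at h3
  have hrepinj : ∀ q q', (rep q : G) * (rep q' : G)⁻¹ ∈ c i.castSucc → q = q' := by
    intro q q' hm
    have h3 := hnorm (rep q' : G)⁻¹ (Subgroup.inv_mem _ (rep q').2) _ hm
    have h4 : (rep q' : G)⁻¹ * ((rep q : G) * (rep q' : G)⁻¹) * ((rep q' : G)⁻¹)⁻¹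
        = (rep q' : G)⁻¹ * (rep q : G) := by group
    rw [h4] at h3
    have h5 : ((rep q')⁻¹ * rep q : cen (c i.succ) e) ∈
        (c i.castSucc).subgroupOf (cen (c i.succ) e) := by
      rw [Subgroup.mem_subgroupOf]; exact h3
    have h6 : QuotientGroup.mk (rep q') = QuotientGroup.mk (rep q) := QuotientGroup.eq.mpr h5
    rw [hrep, hrep] at h6
    exact h6.symm
  have hconjmem : ∀ (x : cen (c i.succ) e) α, α ∈ compIn (c i.castSucc) e →
      conjEl (x : G) α ∈ compIn (c i.castSucc) e := by
    intro x α hα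
    have hxe : conjEl (x : G) e = e := by
      unfold conjEl
      rw [hcen x, mul_assoc, ← map_mul, mul_inv_cancel, map_one, mul_one]
    induction hα using NonUnitalSubring.closure_induction with
    | mem a ha =>
        obtain ⟨β, rfl⟩ := ha
        rw [conjEl_mul, hxe, emb_eq_sum, conjEl_sum, Finset.sum_mul]
        refine sum_mem fun h _ => ?_
        rw [conjEl_single]
        exact single_mul_mem_compIn _ e (hnorm (x : G) x.2 _ h.2) _
    | zero => rw [conjEl_zero]; exact zero_mem _
    | add a b _ _ ha hb => rw [conjEl_add]; exact add_mem ha hb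
    | neg a _ ha => rw [conjEl_neg]; exact neg_mem ha
    | mul a b _ _ ha hb => rw [conjEl_mul]; exact mul_mem ha hb
  have hw : ∀ q q', (rep q : G) * (rep q' : G) * (rep (q * q') : G)⁻¹ ∈ c i.castSucc := by
    intro q q'
    have := hcoset (rep q * rep q') (q * q') (by rw [QuotientGroup.mk_mul, hrep, hrep])
    simpa using this
  have hτ : ∀ q q', τ q q' ∈ compIn (c i.castSucc) e := by
    intro q q'
    show MonoidAlgebra.of ℚ G _ * e ∈ _
    rw [MonoidAlgebra.of_apply]
    exact single_mul_mem_compIn _ e (hw q q') 1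
  have hmul : ∀ f g, (∀ q, f q ∈ compIn (c i.castSucc) e) →
      (∀ q, g q ∈ compIn (c i.castSucc) e) →
      Ψ f * Ψ g = Ψ fun q => ∑ p ∈ Finset.univ.filter (fun p : _ × _ => p.1 * p.2 = q),
        f p.1 * σ p.1 (g p.2) * τ p.1 p.2 := by
    intro f g hf hg
    have key : ∀ p1 p2, f p1 * σ p1 (g p2) * τ p1 p2
            * MonoidAlgebra.of ℚ G (rep (p1 * p2) : G)
        = f p1 * MonoidAlgebra.of ℚ G (rep p1 : G)
            * (g p2 * MonoidAlgebra.of ℚ G (rep p2 : G)) := by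
      intro p1 p2
      show f p1 * conjEl (rep p1 : G) (g p2)
          * (MonoidAlgebra.of ℚ G ((rep p1 : G) * (rep p2 : G) * (rep (p1 * p2) : G)⁻¹) * e)
          * MonoidAlgebra.of ℚ G (rep (p1 * p2) : G) = _
      have harg : (rep p1 : G) * (rep p2 : G) * (rep (p1 * p2) : G)⁻¹
          = (rep p1 : G) * ((rep p2 : G) * (rep (p1 * p2) : G)⁻¹) := mul_assoc _ _ _
      rw [harg]
      unfold conjEl
      have h1 : MonoidAlgebra.of ℚ G ((rep p1 : G))⁻¹
          * (MonoidAlgebra.of ℚ G ((rep p1 : G) * ((rep p2 : G) * (rep (p1 * p2) : G)⁻¹))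
            * (e * MonoidAlgebra.of ℚ G (rep (p1 * p2) : G)))
          = MonoidAlgebra.of ℚ G (rep p2 : G) * e := by
        rw [← hcen (rep (p1 * p2)), ← mul_assoc
          (MonoidAlgebra.of ℚ G ((rep p1 : G) * ((rep p2 : G) * (rep (p1 * p2) : G)⁻¹))),
          ← map_mul, ← mul_assoc, ← map_mul]
        have harg2 : (rep p1 : G)⁻¹ * ((rep p1 : G) * ((rep p2 : G) * (rep (p1 * p2) : G)⁻¹)
            * (rep (p1 * p2) : G)) = (rep p2 : G) := by group
        rw [harg2]
      simp only [mul_assoc]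
      rw [h1, hcen (rep p2), ← mul_assoc (g p2), habs _ (hg p2)]
    show (∑ q, f q * MonoidAlgebra.of ℚ G (rep q : G))
        * (∑ q, g q * MonoidAlgebra.of ℚ G (rep q : G))
      = ∑ q, (∑ p ∈ Finset.univ.filter (fun p : _ × _ => p.1 * p.2 = q),
          f p.1 * σ p.1 (g p.2) * τ p.1 p.2) * MonoidAlgebra.of ℚ G (rep q : G)
    calc (∑ q, f q * MonoidAlgebra.of ℚ G (rep q : G))
        * (∑ q, g q * MonoidAlgebra.of ℚ G (rep q : G))
        = ∑ p1, ∑ p2, f p1 * MonoidAlgebra.of ℚ G (rep p1 : G)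
            * (g p2 * MonoidAlgebra.of ℚ G (rep p2 : G)) := by
          rw [Finset.sum_mul_sum]
      _ = ∑ p ∈ Finset.univ ×ˢ Finset.univ,
            (fun p1 p2 => f p1 * MonoidAlgebra.of ℚ G (rep p1 : G)
              * (g p2 * MonoidAlgebra.of ℚ G (rep p2 : G))) p.1 p.2 :=
          (Finset.sum_product' _ _ _).symm
      _ = ∑ p : _ × _, f p.1 * σ p.1 (g p.2) * τ p.1 p.2
            * MonoidAlgebra.of ℚ G (rep (p.1 * p.2) : G) := by
          rw [Finset.univ_product_univ]
          exact Finset.sum_congr rfl fun p _ => (key p.1 p.2).symm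
      _ = ∑ q, ∑ p ∈ Finset.univ.filter (fun p : _ × _ => p.1 * p.2 = q),
            f p.1 * σ p.1 (g p.2) * τ p.1 p.2
            * MonoidAlgebra.of ℚ G (rep (p.1 * p.2) : G) :=
          (Finset.sum_fiberwise _ _ _).symm
      _ = ∑ q, (∑ p ∈ Finset.univ.filter (fun p : _ × _ => p.1 * p.2 = q),
            f p.1 * σ p.1 (g p.2) * τ p.1 p.2) * MonoidAlgebra.of ℚ G (rep q : G) := by
          refine Finset.sum_congr rfl fun q _ => ?_
          rw [Finset.sum_mul]
          refine Finset.sum_congr rfl fun p hp => ?_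
          rw [(Finset.mem_filter.mp hp).2]
  refine ⟨?_, ?_, ?_, hmul⟩
  · intro f hf
    show (∑ q, f q * MonoidAlgebra.of ℚ G (rep q : G)) ∈ compIn (cen (c i.succ) e) e
    refine sum_mem fun q _ => ?_
    have h : f q * MonoidAlgebra.of ℚ G (rep q : G)
        = f q * (MonoidAlgebra.of ℚ G (rep q : G) * e) := by
      rw [hcen (rep q), ← mul_assoc, habs _ (hf q)]
    rw [h]
    refine mul_mem (compIn_mono hHC e (hf q)) ?_
    rw [MonoidAlgebra.of_apply]
    exact single_mul_mem_compIn _ e (rep q).2 1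
  · intro f g hf hg heq
    have heq' : ∑ q, f q * MonoidAlgebra.of ℚ G (rep q : G)
        = ∑ q, g q * MonoidAlgebra.of ℚ G (rep q : G) := heq
    funext q0
    have hd : ∀ q, f q - g q ∈ compIn (c i.castSucc) e := fun q => sub_mem (hf q) (hg q)
    have hsum : ∑ q, (f q - g q) * MonoidAlgebra.of ℚ G (rep q : G) = 0 := by
      simp only [sub_mul]
      rw [Finset.sum_sub_distrib, heq', sub_self]
    have hzero : f q0 - g q0 = 0 := by
      refine MonoidAlgebra.ext (Finsupp.ext fun y => ?_)
      rw [MonoidAlgebra.coeff_zero, Finsupp.coe_zero, Pi.zero_apply]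
      by_cases hy : y ∈ c i.castSucc
      · have happ : ∑ q, ((f q - g q) * MonoidAlgebra.of ℚ G (rep q : G)).coeff
            (y * (rep q0 : G)) = 0 := by
          rw [← Finsupp.finset_sum_apply, ← MonoidAlgebra.coeff_sum, hsum, MonoidAlgebra.coeff_zero,
            Finsupp.coe_zero, Pi.zero_apply]
        rw [Finset.sum_eq_single q0] at happ
        · rw [MonoidAlgebra.of_apply, MonoidAlgebra.mul_single_apply, mul_inv_cancel_right,
            mul_one] at happ
          exact happ
        · intro q _ hq
          have hz : (f q - g q).coeff (y * (rep q0 : G) * (rep q : G)⁻¹) = 0 := by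
            by_contra hne
            have hmem := hsupp _ (hd q) _ hne
            have h2 : (rep q0 : G) * (rep q : G)⁻¹ ∈ c i.castSucc := by
              have h3 := (c i.castSucc).mul_mem ((c i.castSucc).inv_mem hy) hmem
              have h4 : y⁻¹ * (y * (rep q0 : G) * (rep q : G)⁻¹)
                  = (rep q0 : G) * (rep q : G)⁻¹ := by group
              rwa [h4] at h3
            exact hq (hrepinj q q0 (hrepinj q0 q h2 ▸ h2) ▸ (hrepinj q0 q h2).symm)
          rw [MonoidAlgebra.of_apply, MonoidAlgebra.mul_single_apply, mul_one]
          exact hz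
        · intro hnot
          exact absurd (Finset.mem_univ q0) hnot
      · by_contra hne
        exact hy (hsupp _ (hd q0) y hne)
    have := sub_eq_zero.mp hzero
    exact this
  · intro α hα
    replace hα : α ∈ NonUnitalSubring.closure
        (Set.range fun β : MonoidAlgebra ℚ (cen (c i.succ) e) =>
          emb (cen (c i.succ) e) β * e) := hα
    induction hα using NonUnitalSubring.closure_induction with
    | mem a ha =>
        obtain ⟨β, rfl⟩ := ha
        show ∃ f, (∀ q, f q ∈ compIn (c i.castSucc) e) ∧ Ψ f = emb (cen (c i.succ) e) β * e
        rw [emb_eq_sum, Finset.sum_mul]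
        refine Finset.sum_induction _
          (fun z => ∃ f, (∀ q, f q ∈ compIn (c i.castSucc) e) ∧ Ψ f = z) ?_ ?_ ?_
        · rintro a b ⟨fa, hfa, rfl⟩ ⟨fb, hfb, rfl⟩
          refine ⟨fun q => fa q + fb q, fun q => add_mem (hfa q) (hfb q), ?_⟩
          show ∑ q, (fa q + fb q) * MonoidAlgebra.of ℚ G (rep q : G) = Ψ fa + Ψ fb
          show ∑ q, (fa q + fb q) * MonoidAlgebra.of ℚ G (rep q : G)
            = (∑ q, fa q * MonoidAlgebra.of ℚ G (rep q : G))
              + ∑ q, fb q * MonoidAlgebra.of ℚ G (rep q : G)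
          rw [← Finset.sum_add_distrib]
          exact Finset.sum_congr rfl fun q _ => add_mul _ _ _
        · exact ⟨fun _ => 0, fun q => zero_mem _, by
            show ∑ q, (0 : MonoidAlgebra ℚ G) * MonoidAlgebra.of ℚ G (rep q : G) = 0
            simp⟩
        · intro x _
          refine ⟨fun q => if q = QuotientGroup.mk x then
              MonoidAlgebra.single ((x : G) * (rep (QuotientGroup.mk x) : G)⁻¹) (β.coeff x) * e
              else 0, ?_, ?_⟩
          · intro q
            dsimp only
            split_ifs
            · exact single_mul_mem_compIn _ e (hcoset x _ rfl) _
            · exact zero_mem _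
          · show ∑ q, (if q = QuotientGroup.mk x then
                MonoidAlgebra.single ((x : G) * (rep (QuotientGroup.mk x) : G)⁻¹) (β.coeff x) * e
                else 0) * MonoidAlgebra.of ℚ G (rep q : G)
              = MonoidAlgebra.single (x : G) (β.coeff x) * e
            rw [Finset.sum_eq_single (QuotientGroup.mk x)]
            · rw [if_pos rfl, mul_assoc, ← hcen (rep (QuotientGroup.mk x)), ← mul_assoc,
                MonoidAlgebra.of_apply, MonoidAlgebra.single_mul_single, mul_one,
                inv_mul_cancel_right]
            · intro q _ hq
              rw [if_neg hq, zero_mul]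
            · intro hnot
              exact absurd (Finset.mem_univ _) hnot
    | zero => exact ⟨fun _ => 0, fun q => zero_mem _, by
        show ∑ q, (0 : MonoidAlgebra ℚ G) * MonoidAlgebra.of ℚ G (rep q : G) = 0
        simp⟩
    | add a b _ _ ha hb =>
        obtain ⟨fa, hfa, rfl⟩ := ha; obtain ⟨fb, hfb, rfl⟩ := hb
        refine ⟨fun q => fa q + fb q, fun q => add_mem (hfa q) (hfb q), ?_⟩
        show ∑ q, (fa q + fb q) * MonoidAlgebra.of ℚ G (rep q : G)
          = (∑ q, fa q * MonoidAlgebra.of ℚ G (rep q : G))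
            + ∑ q, fb q * MonoidAlgebra.of ℚ G (rep q : G)
        rw [← Finset.sum_add_distrib]
        exact Finset.sum_congr rfl fun q _ => add_mul _ _ _
    | neg a _ ha =>
        obtain ⟨fa, hfa, rfl⟩ := ha
        refine ⟨fun q => -(fa q), fun q => neg_mem (hfa q), ?_⟩
        show ∑ q, -(fa q) * MonoidAlgebra.of ℚ G (rep q : G)
          = -∑ q, fa q * MonoidAlgebra.of ℚ G (rep q : G)
        rw [← Finset.sum_neg_distrib]
        exact Finset.sum_congr rfl fun q _ => neg_mul _ _
    | mul a b _ _ ha hb =>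
        obtain ⟨fa, hfa, rfl⟩ := ha; obtain ⟨fb, hfb, rfl⟩ := hb
        refine ⟨_, ?_, (hmul fa fb hfa hfb).symm⟩
        intro q
        refine sum_mem fun p _ => ?_
        exact mul_mem (mul_mem (hfa p.1) (hconjmem (rep p.1) _ (hfb p.2))) (hτ p.1 p.2)

end PaperGSM
end
end

section
/- Let G be a finite group, (H,K) a generalized strong Shoda pair of G with strong inductive chain H = H_0 ≤ H_1 ≤ ⋯ ≤ H_n = G, and λ a linear character of H with kernel K. For 0 ≤ i ≤ n−1 put C_i = Cen_{H_{i+1}}(e_ℚ(λ^{H_i})), and for x ∈ C_i/H_i let (σ_{H_i})_x be the conjugation automorphism of ℚH_i e_ℚ(λ^{H_i}) induced by a fixed coset representative x̄ ∈ C_i of x. Then for every non-identity x ∈ C_i/H_i, the automorphism (σ_{H_i})_x is not an inner automorphism of ℚH_i e_ℚ(λ^{H_i}). -/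
open scoped Classical
set_option linter.unusedSectionVars false

noncomputable section

namespace PaperGSM

variable {G : Type} [Group G] [Fintype G]

instance instCoeFunMonoidAlgebraCoeff {k M : Type*} [Semiring k] :
    CoeFun (MonoidAlgebra k M) (fun _ => M → k) :=
  ⟨fun x => ⇑x.coeff⟩

section AuxProof

open MonoidAlgebra

variable {G : Type} [Group G] [Fintype G]

lemma aux_mul_apply {k : Type*} [Semiring k] (α β : MonoidAlgebra k G) (g : G) :
    (α * β) g = ∑ a : G, α a * β (a⁻¹ * g) := by
  rw [MonoidAlgebra.coeff_mul_apply_left, Finsupp.sum]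
  apply Finset.sum_subset (Finset.subset_univ _)
  intro a _ ha
  rw [Finsupp.notMem_support_iff.mp ha, zero_mul]

lemma aux_sum_single_apply {k : Type*} [Semiring k] (f : G → k) (h : G) :
    (∑ g : G, MonoidAlgebra.single g (f g)) h = f h := by
  classical
  rw [MonoidAlgebra.coeff_sum, Finset.sum_apply']
  simp [MonoidAlgebra.coeff_single, Finsupp.single_apply]

/-- `λ̃`: the linear character `lam` of `H` extended by zero to all of `G`. -/
noncomputable def lamTil (H : Subgroup G) (lam : H →* ℂ) : G → ℂ :=
  fun g => if h : g ∈ H then lam ⟨g, h⟩ else 0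

variable {H : Subgroup G} (lam : H →* ℂ)

lemma lamTil_of_mem {g : G} (hg : g ∈ H) : lamTil H lam g = lam ⟨g, hg⟩ := dif_pos hg

lemma lamTil_of_not_mem {g : G} (hg : g ∉ H) : lamTil H lam g = 0 := dif_neg hg

lemma lamTil_one : lamTil H lam 1 = 1 := by
  rw [lamTil_of_mem lam H.one_mem]
  have : (⟨1, H.one_mem⟩ : H) = 1 := rfl
  rw [this, map_one]

lemma lamTil_mul_left {a : G} (ha : a ∈ H) (c : G) :
    lamTil H lam (a * c) = lamTil H lam a * lamTil H lam c := by
  by_cases hc : c ∈ H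
  · rw [lamTil_of_mem lam ha, lamTil_of_mem lam hc, lamTil_of_mem lam (H.mul_mem ha hc)]
    have : (⟨a * c, H.mul_mem ha hc⟩ : H) = ⟨a, ha⟩ * ⟨c, hc⟩ := rfl
    rw [this, map_mul]
  · rw [lamTil_of_not_mem lam hc, mul_zero, lamTil_of_not_mem lam]
    intro hac
    exact hc (by simpa using H.mul_mem (H.inv_mem ha) hac)

lemma lamTil_mul_right {c : G} (hc : c ∈ H) (a : G) :
    lamTil H lam (a * c) = lamTil H lam a * lamTil H lam c := by
  by_cases ha : a ∈ H
  · exact lamTil_mul_left lam ha c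
  · rw [lamTil_of_not_mem lam ha, zero_mul, lamTil_of_not_mem lam]
    intro hac
    exact ha (by simpa using H.mul_mem hac (H.inv_mem hc))

lemma lamTil_inv_cancel {a : G} (ha : a ∈ H) :
    lamTil H lam a * lamTil H lam a⁻¹ = 1 := by
  rw [← lamTil_mul_left lam ha a⁻¹, mul_inv_cancel, lamTil_one]

lemma lamTil_ne_zero {a : G} (ha : a ∈ H) : lamTil H lam a ≠ 0 :=
  left_ne_zero_of_mul_eq_one (lamTil_inv_cancel lam ha)

lemma lam_abs_one (h : H) : ‖lam h‖ = 1 := by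
  have hn : 0 < orderOf h := orderOf_pos h
  have hp : lam h ^ orderOf h = 1 := by rw [← map_pow, pow_orderOf_eq_one, map_one]
  have habs : ‖lam h‖ ^ orderOf h = 1 := by
    rw [← norm_pow, hp, norm_one]
  rcases lt_trichotomy (‖lam h‖) 1 with hlt | heq | hgt
  · exfalso
    have := pow_lt_one₀ (norm_nonneg _) hlt hn.ne'
    rw [habs] at this; exact lt_irrefl 1 this
  · exact heq
  · exfalso
    have := one_lt_pow₀ hgt hn.ne'
    rw [habs] at this; exact lt_irrefl 1 this

lemma lam_conj (h : H) : (starRingEnd ℂ) (lam h) = lam h⁻¹ := by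
  have h1 : lam h ≠ 0 := by
    intro h0
    have := lam_abs_one lam h
    rw [h0] at this; simp at this
  have hsq : (lam h) * (starRingEnd ℂ) (lam h) = 1 := by
    rw [Complex.mul_conj]
    norm_cast
    rw [← Complex.sq_norm, lam_abs_one lam h, one_pow]
  have : (starRingEnd ℂ) (lam h) = (lam h)⁻¹ := (inv_eq_of_mul_eq_one_right hsq).symm
  rw [this, ← map_inv]

lemma lamTil_conj (g : G) :
    (starRingEnd ℂ) (lamTil H lam g) = lamTil H lam g⁻¹ := by
  by_cases hg : g ∈ H
  · rw [lamTil_of_mem lam hg, lamTil_of_mem lam (H.inv_mem hg), lam_conj]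
    congr 1
  · rw [lamTil_of_not_mem lam hg, lamTil_of_not_mem lam (fun hc => hg (by simpa using H.inv_mem hc)), map_zero]

end AuxProof
section AuxProof2

open MonoidAlgebra

variable {G : Type} [Group G] [Fintype G]

/-- `Θ`: the induced character `λ^B` extended by zero to all of `G`. -/
noncomputable def Theta (H : Subgroup G) (lam : H →* ℂ) (B : Subgroup G) : G → ℂ :=
  fun g => if hg : g ∈ B then lamChar lam B ⟨g, hg⟩ else 0

variable {H B : Subgroup G} (lam : H →* ℂ)

lemma Theta_of_not_mem {g : G} (hg : g ∉ B) : Theta H lam B g = 0 := dif_neg hg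

lemma card_subgroupOf (hHB : H ≤ B) : Nat.card (H.subgroupOf B) = Nat.card H :=
  Nat.card_congr (Subgroup.subgroupOfEquivOfLe hHB).toEquiv

lemma Theta_eq (hHB : H ≤ B) {g : G} (hg : g ∈ B) :
    Theta H lam B g
      = (Nat.card H : ℂ)⁻¹ * ∑ z : B, lamTil H lam ((z : G) * g * (z : G)⁻¹) := by
  rw [Theta]
  rw [dif_pos hg]
  simp only [lamChar, indChar]
  rw [card_subgroupOf hHB]
  have hsum : ∀ z : B,
      (if h : z * (⟨g, hg⟩ : B) * z⁻¹ ∈ H.subgroupOf B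
        then lam ⟨((z * (⟨g, hg⟩ : B) * z⁻¹ : B) : G), h⟩ else 0)
        = lamTil H lam ((z : G) * g * (z : G)⁻¹) := by
    intro z
    have hcoe : (((z * (⟨g, hg⟩ : B) * z⁻¹ : B)) : G) = (z : G) * g * (z : G)⁻¹ := by
      simp
    have hiff : (z * (⟨g, hg⟩ : B) * z⁻¹ ∈ H.subgroupOf B) ↔ ((z : G) * g * (z : G)⁻¹ ∈ H) := by
      rw [Subgroup.mem_subgroupOf, hcoe]
    by_cases hm : (z : G) * g * (z : G)⁻¹ ∈ H
    · rw [dif_pos (hiff.mpr hm), lamTil_of_mem lam hm]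
      exact congrArg lam (Subtype.ext hcoe)
    · rw [dif_neg (fun hc => hm (hiff.mp hc)), lamTil_of_not_mem lam hm]
  rw [Finset.sum_congr rfl (fun z _ => hsum z)]

lemma Theta_conj (hHB : H ≤ B) {cc : G} (hc : cc ∈ B) (g : G) :
    Theta H lam B (cc * g * cc⁻¹) = Theta H lam B g := by
  by_cases hg : g ∈ B
  · have hg' : cc * g * cc⁻¹ ∈ B := B.mul_mem (B.mul_mem hc hg) (B.inv_mem hc)
    rw [Theta_eq lam hHB hg, Theta_eq lam hHB hg']
    congr 1
    exact Fintype.sum_equiv (Equiv.mulRight (⟨cc, hc⟩ : B))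
      (fun z => lamTil H lam ((z : G) * (cc * g * cc⁻¹) * (z : G)⁻¹))
      (fun z => lamTil H lam ((z : G) * g * (z : G)⁻¹))
      (fun z => by
        simp only [Equiv.coe_mulRight]
        congr 1
        push_cast
        group)
  · rw [Theta_of_not_mem lam hg, Theta_of_not_mem lam]
    intro hc'
    exact hg (by
      have : g = cc⁻¹ * (cc * g * cc⁻¹) * cc := by group
      rw [this]
      exact B.mul_mem (B.mul_mem (B.inv_mem hc) hc') hc)

lemma Theta_swap (hHB : H ≤ B) {a : G} (ha : a ∈ B) (q : G) :
    Theta H lam B (a * q) = Theta H lam B (q * a) := by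
  have : a * q = a * (q * a) * a⁻¹ := by group
  rw [this, Theta_conj lam hHB ha]

lemma Theta_conj_inv (hHB : H ≤ B) (g : G) :
    (starRingEnd ℂ) (Theta H lam B g) = Theta H lam B g⁻¹ := by
  by_cases hg : g ∈ B
  · rw [Theta_eq lam hHB hg, Theta_eq lam hHB (B.inv_mem hg), map_mul, map_sum]
    congr 1
    · rw [map_inv₀, map_natCast]
    · apply Finset.sum_congr rfl
      intro z _
      rw [lamTil_conj]
      congr 1
      group
  · rw [Theta_of_not_mem lam hg, map_zero, Theta_of_not_mem lam]
    intro hc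
    exact hg (by simpa using B.inv_mem hc)

end AuxProof2
section AuxProof3

variable {G : Type} [Group G] [Fintype G]

lemma sum_translate_zero {Γ : Type*} [Group Γ] [Fintype Γ] (f : Γ → ℂ) (d₀ : Γ) (cc : ℂ)
    (hc : cc ≠ 1) (htr : ∀ h, f (h * d₀) = cc * f h) : ∑ h : Γ, f h = 0 := by
  have h1 : ∑ h : Γ, f (h * d₀) = ∑ h : Γ, f h :=
    Fintype.sum_equiv (Equiv.mulRight d₀) _ _ (fun h => rfl)
  have h2 : ∑ h : Γ, f (h * d₀) = cc * ∑ h : Γ, f h := by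
    rw [Finset.mul_sum]
    exact Finset.sum_congr rfl (fun h _ => htr h)
  have h3 : (cc - 1) * ∑ h : Γ, f h = 0 := by
    rw [sub_mul, one_mul, ← h2, h1, sub_self]
  rcases mul_eq_zero.mp h3 with h | h
  · exact absurd (sub_eq_zero.mp h) hc
  · exact h

variable {H K B : Subgroup G} (lam : H →* ℂ)

lemma card_filter_mem (hHB : H ≤ B) :
    ((Finset.univ : Finset B).filter (fun h : B => (h : G) ∈ H)).card = Nat.card H := by
  classical
  rw [← Fintype.card_subtype]
  rw [Nat.card_eq_fintype_card]
  apply Fintype.card_congr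
  exact {
    toFun := fun h => ⟨(h.1 : G), h.2⟩
    invFun := fun h => ⟨⟨(h : G), hHB h.2⟩, h.2⟩
    left_inv := fun h => by ext; rfl
    right_inv := fun h => by ext; rfl }

lemma sum_indicator_H (hHB : H ≤ B) (cc : ℂ) :
    ∑ h : B, (if (h : G) ∈ H then cc else 0) = (Nat.card H : ℂ) * cc := by
  classical
  rw [Finset.sum_ite, Finset.sum_const, Finset.sum_const_zero, add_zero,
    card_filter_mem hHB, nsmul_eq_mul]

/-- The key vanishing lemma: if `s ∉ H` then the twisted character sum vanishes,
by the Shoda condition. -/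
lemma key_vanish (hSP : IsShodaPair H K) (hker : IsLinCharKer H K lam) (hHB : H ≤ B)
    (s t : G) (hs : s ∉ H) :
    ∑ h : B, lamTil H lam (h : G) * lamTil H lam (s * (h : G)⁻¹ * t * s⁻¹) = 0 := by
  by_cases hd : ∃ d : B, (d : G) ∈ H ∧ s * d * s⁻¹ ∈ H ∧
      lamTil H lam (s * d * s⁻¹) ≠ lamTil H lam d
  · obtain ⟨d₀, hd₀H, hd₀c, hd₀ne⟩ := hd
    have hinv : s * (d₀ : G)⁻¹ * s⁻¹ = (s * d₀ * s⁻¹)⁻¹ := by group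
    have hinvmem : s * (d₀ : G)⁻¹ * s⁻¹ ∈ H := by rw [hinv]; exact H.inv_mem hd₀c
    have hcu : lamTil H lam (s * d₀ * s⁻¹) * lamTil H lam (s * (d₀ : G)⁻¹ * s⁻¹) = 1 := by
      rw [hinv]; exact lamTil_inv_cancel lam hd₀c
    set cc := lamTil H lam (d₀ : G) * lamTil H lam (s * (d₀ : G)⁻¹ * s⁻¹) with hcc
    have hcne : cc ≠ 1 := by
      intro h1
      apply hd₀ne
      have hz : lamTil H lam (s * d₀ * s⁻¹) ≠ 0 := lamTil_ne_zero lam hd₀c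
      have hiv : lamTil H lam (s * (d₀ : G)⁻¹ * s⁻¹) = (lamTil H lam (s * d₀ * s⁻¹))⁻¹ :=
        (inv_eq_of_mul_eq_one_right hcu).symm
      rw [hcc, hiv] at h1
      exact ((mul_inv_eq_one₀ hz).mp h1).symm
    apply sum_translate_zero _ d₀ cc hcne
    intro h
    have e1 : lamTil H lam ((h * d₀ : B) : G)
        = lamTil H lam (h : G) * lamTil H lam (d₀ : G) := by
      push_cast
      exact lamTil_mul_right lam hd₀H _
    have e2 : lamTil H lam (s * ((h * d₀ : B) : G)⁻¹ * t * s⁻¹)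
        = lamTil H lam (s * (d₀ : G)⁻¹ * s⁻¹) * lamTil H lam (s * (h : G)⁻¹ * t * s⁻¹) := by
      have harg : s * ((h * d₀ : B) : G)⁻¹ * t * s⁻¹
          = (s * (d₀ : G)⁻¹ * s⁻¹) * (s * (h : G)⁻¹ * t * s⁻¹) := by
        push_cast
        group
      rw [harg]
      exact lamTil_mul_left lam hinvmem _
    rw [e1, e2]
    ring
  · push_neg at hd
    exfalso
    have hprem : ∀ hh ∈ H, hh⁻¹ * (s⁻¹)⁻¹ * hh * s⁻¹ ∈ H → hh⁻¹ * (s⁻¹)⁻¹ * hh * s⁻¹ ∈ K := by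
      intro hh hhH hcH
      have hcH' : hh⁻¹ * s * hh * s⁻¹ ∈ H := by simpa using hcH
      have hconjH : s * hh * s⁻¹ ∈ H := by
        have : s * hh * s⁻¹ = hh * (hh⁻¹ * s * hh * s⁻¹) := by group
        rw [this]; exact H.mul_mem hhH hcH'
      have heq := hd ⟨hh, hHB hhH⟩ hhH hconjH
      have hlam1 : lamTil H lam (hh⁻¹ * (s⁻¹)⁻¹ * hh * s⁻¹) = 1 := by
        have harg : hh⁻¹ * (s⁻¹)⁻¹ * hh * s⁻¹ = hh⁻¹ * (s * hh * s⁻¹) := by group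
        rw [harg, lamTil_mul_left lam (H.inv_mem hhH), heq]
        have := lamTil_inv_cancel lam hhH
        rw [mul_comm] at this
        exact this
      have hmemH : hh⁻¹ * (s⁻¹)⁻¹ * hh * s⁻¹ ∈ H := hcH
      rw [lamTil_of_mem lam hmemH] at hlam1
      exact (hker.2 ⟨_, hmemH⟩).mp hlam1
    have hs' : s⁻¹ ∈ H := hSP.2.2.2 s⁻¹ hprem
    exact hs (by simpa using H.inv_mem hs')

lemma inner_sum_mem (hHB : H ≤ B) {s : G} (hsH : s ∈ H) (t : G) :
    ∑ h : B, lamTil H lam (h : G) * lamTil H lam (s * (h : G)⁻¹ * t * s⁻¹)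
      = (Nat.card H : ℂ) * lamTil H lam t := by
  by_cases ht : t ∈ H
  · have key : ∀ h : B, lamTil H lam (h : G) * lamTil H lam (s * (h : G)⁻¹ * t * s⁻¹)
        = (if (h : G) ∈ H then lamTil H lam t else 0) := by
      intro h
      by_cases hh : (h : G) ∈ H
      · rw [if_pos hh]
        have harg : s * (h : G)⁻¹ * t * s⁻¹ = s * ((h : G)⁻¹ * (t * s⁻¹)) := by group
        rw [harg, lamTil_mul_left lam hsH, lamTil_mul_left lam (H.inv_mem hh),
          lamTil_mul_left lam ht]
        have c1 : lamTil H lam (h : G) * lamTil H lam (h : G)⁻¹ = 1 :=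
          lamTil_inv_cancel lam hh
        have c2 : lamTil H lam s * lamTil H lam s⁻¹ = 1 :=
          lamTil_inv_cancel lam hsH
        calc lamTil H lam (h : G) * (lamTil H lam s * (lamTil H lam (h : G)⁻¹ *
              (lamTil H lam t * lamTil H lam s⁻¹)))
            = (lamTil H lam (h : G) * lamTil H lam (h : G)⁻¹) *
              (lamTil H lam s * lamTil H lam s⁻¹) * lamTil H lam t := by ring
          _ = lamTil H lam t := by rw [c1, c2]; ring
      · rw [if_neg hh, lamTil_of_not_mem lam hh, zero_mul]
    rw [Finset.sum_congr rfl (fun h _ => key h), sum_indicator_H hHB]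
  · rw [lamTil_of_not_mem lam ht, mul_zero]
    apply Finset.sum_eq_zero
    intro h _
    by_cases hh : (h : G) ∈ H
    · have hA : s * (h : G)⁻¹ * t * s⁻¹ ∉ H := by
        intro hA
        apply ht
        have htt : t = (h : G) * (s⁻¹ * (s * (h : G)⁻¹ * t * s⁻¹) * s) := by group
        rw [htt]
        exact H.mul_mem hh (H.mul_mem (H.mul_mem (H.inv_mem hsH) hA) hsH)
      rw [lamTil_of_not_mem lam hA, mul_zero]
    · rw [lamTil_of_not_mem lam hh, zero_mul]

end AuxProof3
section AuxProof4

open MonoidAlgebra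

variable {G : Type} [Group G] [Fintype G]

/-- the central element of `ℂG` whose coefficients are the values of `λ^B`. -/
noncomputable def yEl (H : Subgroup G) (lam : H →* ℂ) (B : Subgroup G) : MonoidAlgebra ℂ G :=
  ∑ g : G, MonoidAlgebra.single g (Theta H lam B g)

variable {H K B : Subgroup G} (lam : H →* ℂ)

lemma yEl_apply (g : G) : yEl H lam B g = Theta H lam B g :=
  aux_sum_single_apply _ g

lemma sum_over_subgroup (B : Subgroup G) (F : G → ℂ) (h0 : ∀ g, g ∉ B → F g = 0) :
    ∑ g : G, F g = ∑ b : B, F (b : G) := by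
  classical
  have h1 : ∑ g ∈ Finset.univ.filter (fun g : G => g ∈ B), F g = ∑ g : G, F g :=
    Finset.sum_filter_of_ne (fun x _ hx => by_contra fun hB => hx (h0 x hB))
  have h2 : ∑ g ∈ Finset.univ.filter (fun g : G => g ∈ B), F g = ∑ b : B, F (b : G) :=
    Finset.sum_subtype _ (by simp) F
  rw [← h1, h2]

lemma cardH_ne_zero : (Nat.card H : ℂ) ≠ 0 := by
  have : 0 < Nat.card H := Nat.card_pos
  exact_mod_cast this.ne'

end AuxProof4
section AuxProof5

open MonoidAlgebra

variable {G : Type} [Group G] [Fintype G]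
variable {H K B : Subgroup G} (lam : H →* ℂ)

lemma cross_sum_zero (hSP : IsShodaPair H K) (hker : IsLinCharKer H K lam) (hHB : H ≤ B)
    {x : G} (hxB : x ∉ B) (hxn : ∀ g : G, g ∈ B → x * g * x⁻¹ ∈ B) :
    ∑ g : G, Theta H lam B g * Theta H lam B (x * g⁻¹ * x⁻¹) = 0 := by
  classical
  set N : ℂ := (Nat.card H : ℂ) with hN
  rw [sum_over_subgroup B _ (fun g hg => by rw [Theta_of_not_mem lam hg, zero_mul])]
  have expand : ∀ a : B, Theta H lam B (a : G) * Theta H lam B (x * (a : G)⁻¹ * x⁻¹)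
      = N⁻¹ * N⁻¹ * ∑ z : B, ∑ w : B,
          lamTil H lam ((z : G) * (a : G) * (z : G)⁻¹)
            * lamTil H lam ((w : G) * (x * (a : G)⁻¹ * x⁻¹) * (w : G)⁻¹) := by
    intro a
    rw [Theta_eq lam hHB a.2, Theta_eq lam hHB (hxn _ (B.inv_mem a.2)),
      mul_mul_mul_comm, Finset.sum_mul_sum]
  rw [Finset.sum_congr rfl (fun a _ => expand a), ← Finset.mul_sum]
  have main : (∑ a : B, ∑ z : B, ∑ w : B,
      lamTil H lam ((z : G) * (a : G) * (z : G)⁻¹)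
        * lamTil H lam ((w : G) * (x * (a : G)⁻¹ * x⁻¹) * (w : G)⁻¹)) = 0 := by
    rw [Finset.sum_comm]
    apply Finset.sum_eq_zero
    intro z _
    set e : B ≃ B := (Equiv.mulLeft z⁻¹).trans (Equiv.mulRight z) with he
    have hre := (Equiv.sum_comp e (fun a : B => ∑ w : B,
      lamTil H lam ((z : G) * (a : G) * (z : G)⁻¹)
        * lamTil H lam ((w : G) * (x * (a : G)⁻¹ * x⁻¹) * (w : G)⁻¹))).symm
    rw [hre]
    have step : ∀ h : B, (∑ w : B,
        lamTil H lam ((z : G) * ((e h : B) : G) * (z : G)⁻¹)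
          * lamTil H lam ((w : G) * (x * ((e h : B) : G)⁻¹ * x⁻¹) * (w : G)⁻¹))
        = ∑ w : B, lamTil H lam ((h : G))
          * lamTil H lam (((w : G) * x * (z : G)⁻¹) * (h : G)⁻¹ * 1
              * ((w : G) * x * (z : G)⁻¹)⁻¹) := by
      intro h
      apply Finset.sum_congr rfl
      intro w _
      have hcoe : ((e h : B) : G) = (z : G)⁻¹ * (h : G) * (z : G) := by
        rw [he]; simp [mul_assoc]
      have e1 : (z : G) * ((e h : B) : G) * (z : G)⁻¹ = (h : G) := by
        rw [hcoe]; group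
      have e2 : (w : G) * (x * ((e h : B) : G)⁻¹ * x⁻¹) * (w : G)⁻¹
          = ((w : G) * x * (z : G)⁻¹) * (h : G)⁻¹ * 1 * ((w : G) * x * (z : G)⁻¹)⁻¹ := by
        rw [hcoe]; group
      rw [e1, e2]
    rw [Finset.sum_congr rfl (fun h _ => step h), Finset.sum_comm]
    apply Finset.sum_eq_zero
    intro w _
    apply key_vanish lam hSP hker hHB _ 1
    intro hsH
    apply hxB
    have hx : x = (w : G)⁻¹ * ((w : G) * x * (z : G)⁻¹) * (z : G) := by group
    rw [hx]
    exact B.mul_mem (B.mul_mem (B.inv_mem w.2) (hHB hsH)) z.2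
  rw [main, mul_zero]

end AuxProof5
section AuxProof6

open MonoidAlgebra

variable {G : Type} [Group G] [Fintype G]
variable {H K B : Subgroup G} (lam : H →* ℂ)

lemma conv_sum (hSP : IsShodaPair H K) (hker : IsLinCharKer H K lam) (hHB : H ≤ B)
    (g₀ : G) :
    ∑ g : G, Theta H lam B g * Theta H lam B (g⁻¹ * g₀)
      = (Nat.card H : ℂ) * Theta H lam B g₀ := by
  classical
  set N : ℂ := (Nat.card H : ℂ) with hN
  by_cases hg₀ : g₀ ∈ B
  · rw [sum_over_subgroup B _ (fun g hg => by rw [Theta_of_not_mem lam hg, zero_mul])]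
    have expand : ∀ a : B, Theta H lam B (a : G) * Theta H lam B ((a : G)⁻¹ * g₀)
        = N⁻¹ * N⁻¹ * ∑ z : B, ∑ w : B,
            lamTil H lam ((z : G) * (a : G) * (z : G)⁻¹)
              * lamTil H lam ((w : G) * ((a : G)⁻¹ * g₀) * (w : G)⁻¹) := by
      intro a
      rw [Theta_eq lam hHB a.2, Theta_eq lam hHB (B.mul_mem (B.inv_mem a.2) hg₀),
        mul_mul_mul_comm, Finset.sum_mul_sum]
    rw [Finset.sum_congr rfl (fun a _ => expand a), ← Finset.mul_sum]
    have main : (∑ a : B, ∑ z : B, ∑ w : B,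
        lamTil H lam ((z : G) * (a : G) * (z : G)⁻¹)
          * lamTil H lam ((w : G) * ((a : G)⁻¹ * g₀) * (w : G)⁻¹))
        = N * N * (N * Theta H lam B g₀) := by
      rw [Finset.sum_comm]
      have perz : ∀ z : B, (∑ a : B, ∑ w : B,
          lamTil H lam ((z : G) * (a : G) * (z : G)⁻¹)
            * lamTil H lam ((w : G) * ((a : G)⁻¹ * g₀) * (w : G)⁻¹))
          = N * N * lamTil H lam ((z : G) * g₀ * (z : G)⁻¹) := by
        intro z
        set e : B ≃ B := (Equiv.mulLeft z⁻¹).trans (Equiv.mulRight z) with he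
        rw [(Equiv.sum_comp e (fun a : B => ∑ w : B,
          lamTil H lam ((z : G) * (a : G) * (z : G)⁻¹)
            * lamTil H lam ((w : G) * ((a : G)⁻¹ * g₀) * (w : G)⁻¹))).symm]
        have step : ∀ h : B, (∑ w : B,
            lamTil H lam ((z : G) * ((e h : B) : G) * (z : G)⁻¹)
              * lamTil H lam ((w : G) * (((e h : B) : G)⁻¹ * g₀) * (w : G)⁻¹))
            = ∑ s : B, lamTil H lam ((h : G))
              * lamTil H lam ((s : G) * (h : G)⁻¹ * ((z : G) * g₀ * (z : G)⁻¹)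
                  * (s : G)⁻¹) := by
          intro h
          rw [(Equiv.sum_comp (Equiv.mulRight z) (fun w : B =>
            lamTil H lam ((z : G) * ((e h : B) : G) * (z : G)⁻¹)
              * lamTil H lam ((w : G) * (((e h : B) : G)⁻¹ * g₀) * (w : G)⁻¹))).symm]
          apply Finset.sum_congr rfl
          intro s _
          simp only [Equiv.coe_mulRight]
          have hcoe : ((e h : B) : G) = (z : G)⁻¹ * (h : G) * (z : G) := by
            rw [he]; simp [mul_assoc]
          have e1 : (z : G) * ((e h : B) : G) * (z : G)⁻¹ = (h : G) := by
            rw [hcoe]; group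
          have e2 : ((s * z : B) : G) * (((e h : B) : G)⁻¹ * g₀) * ((s * z : B) : G)⁻¹
              = (s : G) * (h : G)⁻¹ * ((z : G) * g₀ * (z : G)⁻¹) * (s : G)⁻¹ := by
            rw [hcoe]; push_cast; group
          rw [e1, e2]
        rw [Finset.sum_congr rfl (fun h _ => step h), Finset.sum_comm]
        have pers : ∀ s : B, (∑ h : B, lamTil H lam ((h : G))
            * lamTil H lam ((s : G) * (h : G)⁻¹ * ((z : G) * g₀ * (z : G)⁻¹) * (s : G)⁻¹))
            = (if (s : G) ∈ H then N * lamTil H lam ((z : G) * g₀ * (z : G)⁻¹) else 0) := by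
          intro s
          by_cases hsH : (s : G) ∈ H
          · rw [if_pos hsH]
            exact inner_sum_mem lam hHB hsH _
          · rw [if_neg hsH]
            exact key_vanish lam hSP hker hHB _ _ hsH
        rw [Finset.sum_congr rfl (fun s _ => pers s), sum_indicator_H hHB]
        ring
      rw [Finset.sum_congr rfl (fun z _ => perz z), ← Finset.mul_sum]
      have hsum : (∑ z : B, lamTil H lam ((z : G) * g₀ * (z : G)⁻¹))
          = N * Theta H lam B g₀ := by
        rw [Theta_eq lam hHB hg₀, ← mul_assoc, mul_inv_cancel₀ (cardH_ne_zero (H := H)), one_mul]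
      rw [hsum]
    rw [main]
    have hNne : N ≠ 0 := cardH_ne_zero (H := H)
    field_simp
  · rw [Theta_of_not_mem lam hg₀, mul_zero]
    apply Finset.sum_eq_zero
    intro g _
    by_cases hg : g ∈ B
    · rw [Theta_of_not_mem lam (g := g⁻¹ * g₀) (fun hc => hg₀ (by
        have : g₀ = g * (g⁻¹ * g₀) := by group
        rw [this]; exact B.mul_mem hg hc)), mul_zero]
    · rw [Theta_of_not_mem lam hg, zero_mul]

end AuxProof6
section AuxProof7

open MonoidAlgebra

variable {G : Type} [Group G] [Fintype G]
variable {H K B : Subgroup G} (lam : H →* ℂ)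

lemma yEl_mul_yEl (hSP : IsShodaPair H K) (hker : IsLinCharKer H K lam) (hHB : H ≤ B) :
    yEl H lam B * yEl H lam B = (Nat.card H : ℂ) • yEl H lam B := by
  ext g₀
  rw [aux_mul_apply, MonoidAlgebra.coeff_smul_apply, yEl_apply, smul_eq_mul]
  rw [Finset.sum_congr rfl (fun a _ => by rw [yEl_apply, yEl_apply])]
  exact conv_sum lam hSP hker hHB g₀

lemma aux_mul_apply_right {k : Type*} [Semiring k] (α β : MonoidAlgebra k G) (g : G) :
    (α * β) g = ∑ a : G, α (g * a⁻¹) * β a := by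
  rw [MonoidAlgebra.coeff_mul_apply_right, Finsupp.sum]
  apply Finset.sum_subset (Finset.subset_univ _)
  intro a _ ha
  rw [Finsupp.notMem_support_iff.mp ha, mul_zero]

/-- two elements supported in `B`, one of which commutes with all `of b`, commute. -/
lemma commute_of_supp {k : Type*} [CommRing k] (α β : MonoidAlgebra k G)
    (hα : ∀ g : G, α g ≠ 0 → g ∈ B)
    (hβ : ∀ b ∈ B, ∀ h : G, β (b⁻¹ * h) = β (h * b⁻¹)) :
    α * β = β * α := by
  ext h
  rw [aux_mul_apply, aux_mul_apply_right]
  apply Finset.sum_congr rfl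
  intro a _
  by_cases ha : α a = 0
  · rw [ha, zero_mul, mul_zero]
  · rw [mul_comm (β (h * a⁻¹)) (α a)]
    congr 1
    exact hβ a (hα a ha) h

lemma yEl_central (hHB : H ≤ B) (b : G) (hb : b ∈ B) (h : G) :
    yEl H lam B (b⁻¹ * h) = yEl H lam B (h * b⁻¹) := by
  rw [yEl_apply, yEl_apply]
  exact Theta_swap lam hHB (B.inv_mem hb) h

lemma yEl_supp (g : G) (hg : g ∉ B) : yEl H lam B g = 0 := by
  rw [yEl_apply]; exact Theta_of_not_mem lam hg

/-- the conjugate `Y' = x⁻¹ ⋆ yy ⋆ x`. -/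
lemma conjY_apply (x : G) (h : G) :
    (MonoidAlgebra.of ℂ G x⁻¹ * yEl H lam B * MonoidAlgebra.of ℂ G x) h
      = Theta H lam B (x * h * x⁻¹) := by
  rw [MonoidAlgebra.of_apply, MonoidAlgebra.of_apply,
    MonoidAlgebra.mul_single_apply, MonoidAlgebra.single_mul_apply]
  rw [one_mul, mul_one, yEl_apply]
  congr 1
  group

lemma conjY_central (hHB : H ≤ B) {x : G} (hxn : ∀ g : G, g ∈ B → x * g * x⁻¹ ∈ B)
    (b : G) (hb : b ∈ B) (h : G) :
    (MonoidAlgebra.of ℂ G x⁻¹ * yEl H lam B * MonoidAlgebra.of ℂ G x) (b⁻¹ * h)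
      = (MonoidAlgebra.of ℂ G x⁻¹ * yEl H lam B * MonoidAlgebra.of ℂ G x) (h * b⁻¹) := by
  rw [conjY_apply, conjY_apply]
  have e1 : x * (b⁻¹ * h) * x⁻¹ = (x * b⁻¹ * x⁻¹) * (x * h * x⁻¹) := by group
  have e2 : x * (h * b⁻¹) * x⁻¹ = (x * h * x⁻¹) * (x * b⁻¹ * x⁻¹) := by group
  rw [e1, e2]
  exact Theta_swap lam hHB (hxn b⁻¹ (B.inv_mem hb)) _

lemma conjY_sq (hSP : IsShodaPair H K) (hker : IsLinCharKer H K lam) (hHB : H ≤ B)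
    (x : G) :
    (MonoidAlgebra.of ℂ G x⁻¹ * yEl H lam B * MonoidAlgebra.of ℂ G x)
        * (MonoidAlgebra.of ℂ G x⁻¹ * yEl H lam B * MonoidAlgebra.of ℂ G x)
      = (Nat.card H : ℂ) •
        (MonoidAlgebra.of ℂ G x⁻¹ * yEl H lam B * MonoidAlgebra.of ℂ G x) := by
  have hone : (MonoidAlgebra.of ℂ G x) * (MonoidAlgebra.of ℂ G x⁻¹) = 1 := by
    rw [← map_mul, mul_inv_cancel, map_one]
  calc (MonoidAlgebra.of ℂ G x⁻¹ * yEl H lam B * MonoidAlgebra.of ℂ G x)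
        * (MonoidAlgebra.of ℂ G x⁻¹ * yEl H lam B * MonoidAlgebra.of ℂ G x)
      = MonoidAlgebra.of ℂ G x⁻¹ * yEl H lam B *
          ((MonoidAlgebra.of ℂ G x) * (MonoidAlgebra.of ℂ G x⁻¹)) *
          (yEl H lam B * MonoidAlgebra.of ℂ G x) := by noncomm_ring
    _ = MonoidAlgebra.of ℂ G x⁻¹ * (yEl H lam B * yEl H lam B) *
          MonoidAlgebra.of ℂ G x := by rw [hone]; noncomm_ring
    _ = _ := by
        rw [yEl_mul_yEl lam hSP hker hHB, mul_smul_comm, smul_mul_assoc]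

/-- the product `yy * Y'` vanishes. -/
lemma yy_mul_conjY_eq_zero (hSP : IsShodaPair H K) (hker : IsLinCharKer H K lam)
    (hHB : H ≤ B) {x : G} (hxB : x ∉ B)
    (hxn : ∀ g : G, g ∈ B → x * g * x⁻¹ ∈ B) :
    yEl H lam B * (MonoidAlgebra.of ℂ G x⁻¹ * yEl H lam B * MonoidAlgebra.of ℂ G x)
      = 0 := by
  classical
  set N : ℂ := (Nat.card H : ℂ) with hN
  set Y' := MonoidAlgebra.of ℂ G x⁻¹ * yEl H lam B * MonoidAlgebra.of ℂ G x with hY'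
  set p := yEl H lam B * Y' with hp
  have hpapp : ∀ g : G, p g = ∑ a : G, Theta H lam B a * Theta H lam B (x * (a⁻¹ * g) * x⁻¹) := by
    intro g
    rw [hp, aux_mul_apply]
    apply Finset.sum_congr rfl
    intro a _
    rw [yEl_apply, hY', conjY_apply]
  -- trace of p is zero
  have hp1 : p 1 = 0 := by
    rw [hpapp 1]
    rw [Finset.sum_congr rfl (fun a _ => by rw [mul_one (a⁻¹ : G)])]
    exact cross_sum_zero lam hSP hker hHB hxB hxn
  -- p is self-adjoint
  have hpadj : ∀ g : G, (starRingEnd ℂ) (p g) = p g⁻¹ := by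
    intro g
    rw [hpapp g, hpapp g⁻¹, map_sum]
    rw [← Equiv.sum_comp (Equiv.inv G) fun a =>
      (starRingEnd ℂ) (Theta H lam B a * Theta H lam B (x * (a⁻¹ * g) * x⁻¹))]
    apply Finset.sum_congr rfl
    intro a _
    simp only [Equiv.inv_apply]
    rw [map_mul, Theta_conj_inv lam hHB, Theta_conj_inv lam hHB]
    simp only [inv_inv]
    by_cases ha : a ∈ B
    · have e1 : (x * (a * g) * x⁻¹)⁻¹ = (x * g⁻¹ * x⁻¹) * (x * a⁻¹ * x⁻¹) := by group
      have e2 : x * (a⁻¹ * g⁻¹) * x⁻¹ = (x * a⁻¹ * x⁻¹) * (x * g⁻¹ * x⁻¹) := by group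
      rw [e1, e2, ← Theta_swap lam hHB (hxn a⁻¹ (B.inv_mem ha)) (x * g⁻¹ * x⁻¹)]
    · rw [Theta_of_not_mem lam ha, zero_mul, zero_mul]
  -- squares
  have hsq : p * p = ((N : ℂ) * N) • p := by
    have hyy : yEl H lam B * yEl H lam B = N • yEl H lam B :=
      yEl_mul_yEl lam hSP hker hHB
    have hYY : Y' * Y' = N • Y' := conjY_sq lam hSP hker hHB x
    have hcomm : yEl H lam B * Y' = Y' * yEl H lam B := by
      apply commute_of_supp _ _ (fun g hg => by_contra fun hgB => hg (yEl_supp lam g hgB))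
      intro b hb h
      exact conjY_central lam hHB hxn b hb h
    calc p * p = yEl H lam B * (Y' * yEl H lam B) * Y' := by rw [hp]; noncomm_ring
      _ = yEl H lam B * (yEl H lam B * Y') * Y' := by rw [← hcomm]
      _ = (yEl H lam B * yEl H lam B) * (Y' * Y') := by noncomm_ring
      _ = ((N : ℂ) * N) • p := by
          rw [hyy, hYY, hp, smul_mul_assoc, mul_smul_comm, smul_smul]
  have hsq1 : (p * p) 1 = 0 := by
    rw [hsq, MonoidAlgebra.coeff_smul_apply, hp1, smul_zero]
  have key : (p * p) 1 = ∑ a : G, ((Complex.normSq (p a) : ℝ) : ℂ) := by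
    rw [aux_mul_apply]
    apply Finset.sum_congr rfl
    intro a _
    rw [mul_one, ← hpadj a, Complex.mul_conj]
  have hsumC : ∑ a : G, ((Complex.normSq (p a) : ℝ) : ℂ) = 0 := by rw [← key, hsq1]
  have hsumR : ∑ a : G, Complex.normSq (p a) = 0 := by exact_mod_cast hsumC
  have hzero : ∀ a : G, p a = 0 := by
    intro a
    have hnn : ∀ b ∈ (Finset.univ : Finset G), 0 ≤ Complex.normSq (p b) :=
      fun b _ => Complex.normSq_nonneg _
    exact Complex.normSq_eq_zero.mp
      ((Finset.sum_eq_zero_iff_of_nonneg hnn).mp hsumR a (Finset.mem_univ a))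
  ext a
  exact hzero a

end AuxProof7
section AuxProof8

variable {Γ : Type} [Group Γ] [Fintype Γ]

lemma extChar_add (χ : Γ → ℂ) (α β : MonoidAlgebra ℚ Γ) :
    extChar χ (α + β) = extChar χ α + extChar χ β := by
  unfold extChar
  rw [← Finset.sum_add_distrib]
  apply Finset.sum_congr rfl
  intro g _
  rw [MonoidAlgebra.coeff_add, Finsupp.add_apply]
  push_cast
  ring

lemma extChar_zero (χ : Γ → ℂ) : extChar χ (0 : MonoidAlgebra ℚ Γ) = 0 := by
  unfold extChar
  apply Finset.sum_eq_zero
  intro g _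
  rw [MonoidAlgebra.coeff_zero, Finsupp.zero_apply]
  push_cast
  ring

lemma exists_pci (χ : Γ → ℂ) (h1 : extChar χ (1 : MonoidAlgebra ℚ Γ) ≠ 0) :
    ∃ e : MonoidAlgebra ℚ Γ, IsPCI e ∧ extChar χ e ≠ 0 := by
  classical
  haveI : Module.Finite ℚ (MonoidAlgebra ℚ Γ) :=
    Module.Finite.of_basis ((Finsupp.basisSingleOne : Module.Basis Γ ℚ (Γ →₀ ℚ)).map
      (MonoidAlgebra.coeffLinearEquiv ℚ).symm)
  suffices main : ∀ d : ℕ, ∀ f : MonoidAlgebra ℚ Γ, (∀ α, f * α = α * f) → f * f = f →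
      extChar χ f ≠ 0 →
      Module.finrank ℚ (LinearMap.range (LinearMap.mulLeft ℚ f)) ≤ d →
      ∃ e, IsPCI e ∧ extChar χ e ≠ 0 by
    exact main (Module.finrank ℚ (LinearMap.range (LinearMap.mulLeft ℚ
      (1 : MonoidAlgebra ℚ Γ)))) 1 (fun α => by rw [one_mul, mul_one]) (one_mul 1) h1 le_rfl
  intro d
  induction d with
  | zero =>
    intro f hc hi hne hd
    exfalso
    apply hne
    have hmem : f ∈ LinearMap.range (LinearMap.mulLeft ℚ f) :=
      ⟨1, by rw [LinearMap.mulLeft_apply, mul_one]⟩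
    have hbot : LinearMap.range (LinearMap.mulLeft ℚ f) = ⊥ :=
      Submodule.finrank_eq_zero.mp (Nat.le_zero.mp hd)
    rw [hbot, Submodule.mem_bot] at hmem
    rw [hmem, extChar_zero]
  | succ d ih =>
    intro f hc hi hne hd
    by_cases hprim : ∀ a b : MonoidAlgebra ℚ Γ, (∀ α, a * α = α * a) → (∀ α, b * α = α * b) →
        a * a = a → b * b = b → a * b = 0 → a + b = f → a = 0 ∨ b = 0
    · exact ⟨f, ⟨hc, hi, fun h0 => hne (by rw [h0, extChar_zero]), hprim⟩, hne⟩
    · push_neg at hprim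
      obtain ⟨a, b, hca, hcb, hia, hib, hab, habf, ha0, hb0⟩ := hprim
      have hba : b * a = 0 := by rw [← hca b, hab]
      have hfa : f * a = a := by rw [← habf, add_mul, hia, hba, add_zero]
      have hfb : f * b = b := by rw [← habf, add_mul, hib, hab, zero_add]
      set Ia := LinearMap.range (LinearMap.mulLeft ℚ a) with hIa'
      set Ib := LinearMap.range (LinearMap.mulLeft ℚ b) with hIb'
      set If := LinearMap.range (LinearMap.mulLeft ℚ f) with hIf'
      have hIaf : Ia ≤ If := by
        rintro _ ⟨δ, rfl⟩
        exact ⟨a * δ, by rw [LinearMap.mulLeft_apply, LinearMap.mulLeft_apply,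
          ← mul_assoc, hfa]⟩
      have hIbf : Ib ≤ If := by
        rintro _ ⟨δ, rfl⟩
        exact ⟨b * δ, by rw [LinearMap.mulLeft_apply, LinearMap.mulLeft_apply,
          ← mul_assoc, hfb]⟩
      have hdisj : Ia ⊓ Ib = ⊥ := by
        rw [Submodule.eq_bot_iff]
        rintro γ ⟨⟨δ₁, h₁⟩, ⟨δ₂, h₂⟩⟩
        rw [LinearMap.mulLeft_apply] at h₁ h₂
        have e1 : a * γ = γ := by rw [← h₁, ← mul_assoc, hia]
        have e2 : a * γ = 0 := by rw [← h₂, ← mul_assoc, hab, zero_mul]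
        rw [← e1, e2]
      have hamem : a ∈ Ia := ⟨1, by rw [LinearMap.mulLeft_apply, mul_one]⟩
      have hbmem : b ∈ Ib := ⟨1, by rw [LinearMap.mulLeft_apply, mul_one]⟩
      have hapos : Module.finrank ℚ Ia ≠ 0 := by
        intro h0
        rw [Submodule.finrank_eq_zero] at h0
        rw [h0, Submodule.mem_bot] at hamem
        exact ha0 hamem
      have hbpos : Module.finrank ℚ Ib ≠ 0 := by
        intro h0
        rw [Submodule.finrank_eq_zero] at h0
        rw [h0, Submodule.mem_bot] at hbmem
        exact hb0 hbmem
      have hsum : Module.finrank ℚ Ia + Module.finrank ℚ Ib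
          = Module.finrank ℚ (Ia ⊔ Ib : Submodule ℚ (MonoidAlgebra ℚ Γ))
            + Module.finrank ℚ (Ia ⊓ Ib : Submodule ℚ (MonoidAlgebra ℚ Γ)) :=
        (Submodule.finrank_sup_add_finrank_inf_eq Ia Ib).symm
      have hinf0 : Module.finrank ℚ (Ia ⊓ Ib : Submodule ℚ (MonoidAlgebra ℚ Γ)) = 0 := by
        rw [hdisj]; exact finrank_bot ℚ _
      have hsup : Module.finrank ℚ (Ia ⊔ Ib : Submodule ℚ (MonoidAlgebra ℚ Γ))
          ≤ Module.finrank ℚ If :=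
        Submodule.finrank_mono (sup_le hIaf hIbf)
      have hbnd : Module.finrank ℚ Ia + Module.finrank ℚ Ib ≤ d + 1 := by
        rw [hsum, hinf0, add_zero]
        exact le_trans hsup hd
      have hextf : extChar χ a + extChar χ b ≠ 0 := by
        rw [← extChar_add, habf]; exact hne
      by_cases hea : extChar χ a ≠ 0
      · exact ih a hca hia hea (by rw [← hIa']; omega)
      · push_neg at hea
        have heb : extChar χ b ≠ 0 := by
          intro h0; apply hextf; rw [hea, h0, add_zero]
        exact ih b hcb hib heb (by rw [← hIb']; omega)

end AuxProof8
section AuxProof9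

open MonoidAlgebra

lemma extChar_one {Γ : Type} [Group Γ] [Fintype Γ] (χ : Γ → ℂ) :
    extChar χ (1 : MonoidAlgebra ℚ Γ) = χ 1 := by
  unfold extChar
  rw [Finset.sum_eq_single_of_mem 1 (Finset.mem_univ 1)
    (fun g _ hg => by
      rw [MonoidAlgebra.one_def, MonoidAlgebra.coeff_single_apply, if_neg (fun h => hg h.symm)]
      norm_num)]
  rw [MonoidAlgebra.one_def, MonoidAlgebra.coeff_single_apply, if_pos rfl]
  norm_num

variable {G : Type} [Group G] [Fintype G]
variable {H K B : Subgroup G} (lam : H →* ℂ)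

lemma lamChar_one_ne (hHB : H ≤ B) :
    extChar (lamChar lam B) (1 : MonoidAlgebra ℚ B) ≠ 0 := by
  rw [extChar_one]
  have h0 : lamChar lam B 1 = Theta H lam B 1 := by
    rw [Theta, dif_pos B.one_mem]
    congr 1
  rw [h0, Theta_eq lam hHB B.one_mem]
  have hterm : ∀ z : B, lamTil H lam ((z : G) * 1 * (z : G)⁻¹) = 1 := by
    intro z
    have : (z : G) * 1 * (z : G)⁻¹ = 1 := by group
    rw [this, lamTil_one]
  rw [Finset.sum_congr rfl (fun z _ => hterm z), Finset.sum_const, Finset.card_univ,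
    nsmul_eq_mul, mul_one]
  apply mul_ne_zero
  · exact inv_ne_zero (cardH_ne_zero (H := H))
  · exact_mod_cast (Fintype.card_pos (α := B)).ne'

/-- coefficientwise cast `ℚG → ℂG` as a ring hom. -/
noncomputable def qc (G : Type) [Group G] [Fintype G] :
    MonoidAlgebra ℚ G →+* MonoidAlgebra ℂ G :=
  MonoidAlgebra.liftNCRingHom
    ((MonoidAlgebra.singleOneRingHom : ℂ →+* MonoidAlgebra ℂ G).comp (Rat.castHom ℂ))
    (MonoidAlgebra.of ℂ G)
    (fun r g => by
      show MonoidAlgebra.single (1 : G) ((Rat.castHom ℂ) r) * MonoidAlgebra.single g 1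
        = MonoidAlgebra.single g 1 * MonoidAlgebra.single (1 : G) ((Rat.castHom ℂ) r)
      rw [MonoidAlgebra.single_mul_single, MonoidAlgebra.single_mul_single]
      rw [one_mul, mul_one, one_mul, mul_one])

lemma qc_apply (α : MonoidAlgebra ℚ G) (g : G) : qc G α g = ((α g : ℚ) : ℂ) := by
  classical
  induction α using MonoidAlgebra.induction_linear with
  | zero => rw [map_zero]; simp
  | add f f' hf hf' =>
    rw [map_add, MonoidAlgebra.coeff_add, Finsupp.add_apply, MonoidAlgebra.coeff_add,
      Finsupp.add_apply, hf, hf']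
    push_cast
    ring
  | single a q =>
    have h1 : qc G (MonoidAlgebra.single a q)
        = MonoidAlgebra.single (1 : G) ((Rat.castHom ℂ) q) * MonoidAlgebra.single a 1 :=
      MonoidAlgebra.liftNC_single _ _ a q
    rw [h1, MonoidAlgebra.single_mul_single, one_mul, mul_one, MonoidAlgebra.coeff_single_apply,
      MonoidAlgebra.coeff_single_apply]
    split_ifs <;> simp

lemma qc_of (g : G) : qc G (MonoidAlgebra.of ℚ G g) = MonoidAlgebra.of ℂ G g := by
  ext h
  rw [qc_apply, MonoidAlgebra.of_apply, MonoidAlgebra.of_apply, MonoidAlgebra.coeff_single_apply,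
    MonoidAlgebra.coeff_single_apply]
  split_ifs <;> norm_num

lemma trace_swap (hHB : H ≤ B) (α β : MonoidAlgebra ℚ G)
    (hα : ∀ g : G, α g ≠ 0 → g ∈ B) :
    ∑ g : G, ((α * β) g : ℂ) * Theta H lam B g⁻¹
      = ∑ g : G, ((β * α) g : ℂ) * Theta H lam B g⁻¹ := by
  have expand : ∀ (γ δ : MonoidAlgebra ℚ G),
      ∑ g : G, ((γ * δ) g : ℂ) * Theta H lam B g⁻¹
        = ∑ a : G, ∑ cc : G, ((γ a : ℚ) : ℂ) * ((δ cc : ℚ) : ℂ)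
            * Theta H lam B (a * cc)⁻¹ := by
    intro γ δ
    have step1 : ∀ g : G, ((γ * δ) g : ℂ) * Theta H lam B g⁻¹
        = ∑ a : G, ((γ a : ℚ) : ℂ) * ((δ (a⁻¹ * g) : ℚ) : ℂ) * Theta H lam B g⁻¹ := by
      intro g
      rw [aux_mul_apply]
      push_cast
      rw [Finset.sum_mul]
    rw [Finset.sum_congr rfl (fun g _ => step1 g), Finset.sum_comm]
    apply Finset.sum_congr rfl
    intro a _
    rw [← Equiv.sum_comp (Equiv.mulLeft a) fun g =>
      ((γ a : ℚ) : ℂ) * ((δ (a⁻¹ * g) : ℚ) : ℂ) * Theta H lam B g⁻¹]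
    apply Finset.sum_congr rfl
    intro cc _
    simp only [Equiv.coe_mulLeft]
    rw [inv_mul_cancel_left]
  rw [expand α β, expand β α, Finset.sum_comm]
  apply Finset.sum_congr rfl
  intro cc _
  apply Finset.sum_congr rfl
  intro a _
  by_cases ha : α a = 0
  · rw [ha]; norm_num
  · have e1 : ((a : G) * cc)⁻¹ = cc⁻¹ * a⁻¹ := by group
    have e2 : ((cc : G) * a)⁻¹ = a⁻¹ * cc⁻¹ := by group
    rw [e1, e2, Theta_swap lam hHB (B.inv_mem (hα a ha)) cc⁻¹]
    ring

end AuxProof9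
section AuxProof10

open MonoidAlgebra

variable {G : Type} [Group G] [Fintype G]

lemma emb_eq (B : Subgroup G) (β : MonoidAlgebra ℚ B) :
    emb B β = MonoidAlgebra.mapDomain (B.subtype) β := by
  rw [emb, MonoidAlgebra.mapDomainRingHom_apply]

lemma emb_supp (B : Subgroup G) (β : MonoidAlgebra ℚ B) (g : G)
    (hg : (emb B β) g ≠ 0) : g ∈ B := by
  classical
  rw [emb_eq] at hg
  have hmem : g ∈ (Finsupp.mapDomain (B.subtype) β.coeff).support := Finsupp.mem_support_iff.mpr hg
  obtain ⟨b, _, rfl⟩ := Finset.mem_image.mp (Finsupp.mapDomain_support hmem)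
  exact b.2

lemma emb_coef (B : Subgroup G) (β : MonoidAlgebra ℚ B) (b : B) :
    (emb B β) (b : G) = β b := by
  rw [emb_eq]
  exact Finsupp.mapDomain_apply Subtype.coe_injective β.coeff b

lemma emb_of (B : Subgroup G) (b : G) (hb : b ∈ B) :
    emb B (MonoidAlgebra.of ℚ B ⟨b, hb⟩) = MonoidAlgebra.of ℚ G b := by
  rw [emb_eq]
  show MonoidAlgebra.mapDomain (B.subtype) (MonoidAlgebra.single (⟨b, hb⟩ : B) 1) = _
  rw [MonoidAlgebra.mapDomain_single]
  rfl

lemma compIn_supp (B : Subgroup G) (e : MonoidAlgebra ℚ G) (he : ∀ g, e g ≠ 0 → g ∈ B) :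
    ∀ γ ∈ compIn B e, ∀ g : G, γ g ≠ 0 → g ∈ B := by
  classical
  have hmulmem : ∀ a b : MonoidAlgebra ℚ G, (∀ g : G, a g ≠ 0 → g ∈ B) →
      (∀ g : G, b g ≠ 0 → g ∈ B) → ∀ g : G, (a * b) g ≠ 0 → g ∈ B := by
    intro a b ha hb g hg
    have hmem : g ∈ (a * b).coeff.support := Finsupp.mem_support_iff.mpr hg
    have hsub := MonoidAlgebra.support_coeff_mul_subset a b hmem
    obtain ⟨p, hp, q, hq, rfl⟩ := Finset.mem_mul.mp hsub
    exact B.mul_mem (ha p (Finsupp.mem_support_iff.mp hp))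
      (hb q (Finsupp.mem_support_iff.mp hq))
  set SB : NonUnitalSubring (MonoidAlgebra ℚ G) :=
    { carrier := {α : MonoidAlgebra ℚ G | ∀ g : G, α g ≠ 0 → g ∈ B}
      zero_mem' := fun {g} hg => absurd rfl hg
      add_mem' := by
        intro a b ha hb g hg
        rw [MonoidAlgebra.coeff_add, Finsupp.add_apply] at hg
        by_cases h1 : a g = 0
        · exact hb g (fun h2 => hg (by rw [h1, h2, add_zero]))
        · exact ha g h1
      neg_mem' := by
        intro a ha g hg
        apply ha g
        intro h0
        apply hg
        rw [MonoidAlgebra.coeff_neg, Finsupp.neg_apply, h0, neg_zero]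
      mul_mem' := fun {a b} ha hb => hmulmem a b ha hb } with hSB
  intro γ hγ
  have hle : compIn B e ≤ SB := by
    apply NonUnitalSubring.closure_le.mpr
    rintro γ' ⟨β, rfl⟩
    exact hmulmem _ _ (fun g hg => emb_supp B β g hg) he
  exact hle hγ

end AuxProof10
/-- For a generalized strong Shoda pair `(H,K)` of `G` with strong inductive
chain as above, the conjugation automorphism `(σ_{H_i})_x` of `ℚH_i e_ℚ(λ^{H_i})` induced by a
representative `x̄ ∈ C_i` of a non-identity `x ∈ C_i/H_i` is not an inner automorphism. -/
theorem conj_aut_not_inner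
    (G : Type) [Group G] [Fintype G] (H K : Subgroup G) (lam : H →* ℂ)
    (hSP : IsShodaPair H K) (hker : IsLinCharKer H K lam)
    {n : ℕ} (c : Fin (n + 1) → Subgroup G) (hchain : IsStrongInductiveChain H lam c)
    (i : Fin n) :
    ∀ x : G, x ∈ cen (c i.succ) (eQ lam (c i.castSucc)) → x ∉ c i.castSucc →
      ¬ ∃ u v : MonoidAlgebra ℚ G,
          u ∈ compIn (c i.castSucc) (eQ lam (c i.castSucc)) ∧
          v ∈ compIn (c i.castSucc) (eQ lam (c i.castSucc)) ∧
          u * v = eQ lam (c i.castSucc) ∧ v * u = eQ lam (c i.castSucc) ∧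
          ∀ α ∈ compIn (c i.castSucc) (eQ lam (c i.castSucc)),
            conjEl x α = u * α * v := by
  classical
  intro x hx hxB
  rintro ⟨u, v, hu, hv, huv, hvu, hinner⟩
  -- abbreviations
  set B : Subgroup G := c i.castSucc with hBdef
  have hHB : H ≤ B := by
    have hm : c 0 ≤ c i.castSucc := hchain.2.2.1 (Fin.zero_le _)
    rw [hchain.1] at hm
    exact hm
  have hNorm := (hchain.2.2.2 i).1
  have hxn : ∀ g : G, g ∈ B → x * g * x⁻¹ ∈ B := fun g hg => hNorm.2 x hx g hg
  have hxninv : ∀ g : G, g ∈ B → x⁻¹ * g * x ∈ B := by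
    intro g hg
    have := hNorm.2 x⁻¹ ((cen (c i.succ) (eQ lam B)).inv_mem hx) g hg
    simpa using this
  -- the chosen primitive central idempotent
  have hex : ∃ e0 : MonoidAlgebra ℚ B, IsPCI e0 ∧ extChar (lamChar lam B) e0 ≠ 0 :=
    exists_pci _ (lamChar_one_ne lam hHB)
  have hEdef : eQchar (lamChar lam B) = hex.choose := dif_pos hex
  have hspec : IsPCI (eQchar (lamChar lam B)) ∧
      extChar (lamChar lam B) (eQchar (lamChar lam B)) ≠ 0 := by
    rw [hEdef]; exact hex.choose_spec
  set e0 : MonoidAlgebra ℚ B := eQchar (lamChar lam B) with he0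
  obtain ⟨⟨hcent0, hidem0, hne0, _⟩, hext0⟩ := hspec
  set e : MonoidAlgebra ℚ G := eQ lam B with hedef
  have heq : e = emb B e0 := rfl
  -- basic facts about e
  have hesupp : ∀ g : G, e g ≠ 0 → g ∈ B := by
    intro g hg
    rw [heq] at hg
    exact emb_supp B e0 g hg
  have hecoef : ∀ b : B, e (b : G) = e0 b := fun b => by rw [heq]; exact emb_coef B e0 b
  have hee : e * e = e := by
    rw [heq, ← map_mul, hidem0]
  have hbe : ∀ b : G, b ∈ B → MonoidAlgebra.of ℚ G b * e = e * MonoidAlgebra.of ℚ G b := by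
    intro b hb
    rw [heq, ← emb_of B b hb, ← map_mul, ← map_mul, (hcent0 (MonoidAlgebra.of ℚ B ⟨b, hb⟩)).symm]
  have hxe : MonoidAlgebra.of ℚ G x * e = e * MonoidAlgebra.of ℚ G x := hx.2
  have honeinv : MonoidAlgebra.of ℚ G x⁻¹ * MonoidAlgebra.of ℚ G x = 1 := by
    rw [← map_mul, inv_mul_cancel, map_one]
  have honemul : MonoidAlgebra.of ℚ G x * MonoidAlgebra.of ℚ G x⁻¹ = 1 := by
    rw [← map_mul, mul_inv_cancel, map_one]
  have hinve : MonoidAlgebra.of ℚ G x⁻¹ * e = e * MonoidAlgebra.of ℚ G x⁻¹ := by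
    calc MonoidAlgebra.of ℚ G x⁻¹ * e
        = MonoidAlgebra.of ℚ G x⁻¹ * (e * MonoidAlgebra.of ℚ G x) *
            MonoidAlgebra.of ℚ G x⁻¹ := by
          rw [mul_assoc, mul_assoc, honemul, mul_one]
      _ = MonoidAlgebra.of ℚ G x⁻¹ * (MonoidAlgebra.of ℚ G x * e) *
            MonoidAlgebra.of ℚ G x⁻¹ := by rw [hxe]
      _ = e * MonoidAlgebra.of ℚ G x⁻¹ := by
          rw [← mul_assoc, honeinv, one_mul]
  -- supports of u and v
  have husupp : ∀ g : G, u g ≠ 0 → g ∈ B := compIn_supp B e hesupp u hu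
  -- the trace functional against θ
  set F : G → ℂ := fun b =>
    ∑ g : G, (((MonoidAlgebra.of ℚ G b * e) g : ℚ) : ℂ) * Theta H lam B g⁻¹ with hF
  have htr : ∀ b : G, b ∈ B → F (x * b * x⁻¹) = F b := by
    intro b hb
    have hmem : MonoidAlgebra.of ℚ G b * e ∈ compIn B e := by
      apply NonUnitalSubring.subset_closure
      refine ⟨MonoidAlgebra.of ℚ B ⟨b, hb⟩, ?_⟩
      show emb B (MonoidAlgebra.of ℚ B ⟨b, hb⟩) * e = MonoidAlgebra.of ℚ G b * e
      rw [emb_of B b hb]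
    have hconj := hinner _ hmem
    have hconj' : MonoidAlgebra.of ℚ G (x * b * x⁻¹) * e
        = u * ((MonoidAlgebra.of ℚ G b * e) * v) := by
      rw [mul_assoc] at hconj
      rw [← hconj]
      show MonoidAlgebra.of ℚ G (x * b * x⁻¹) * e
        = MonoidAlgebra.of ℚ G x * (MonoidAlgebra.of ℚ G b * e) * MonoidAlgebra.of ℚ G x⁻¹
      calc MonoidAlgebra.of ℚ G (x * b * x⁻¹) * e
          = MonoidAlgebra.of ℚ G x * MonoidAlgebra.of ℚ G b *
              (MonoidAlgebra.of ℚ G x⁻¹ * e) := by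
            rw [map_mul, map_mul]
            noncomm_ring
        _ = MonoidAlgebra.of ℚ G x * MonoidAlgebra.of ℚ G b *
              (e * MonoidAlgebra.of ℚ G x⁻¹) := by rw [hinve]
        _ = MonoidAlgebra.of ℚ G x * (MonoidAlgebra.of ℚ G b * e) *
              MonoidAlgebra.of ℚ G x⁻¹ := by noncomm_ring
    have step1 : F (x * b * x⁻¹)
        = ∑ g : G, (((u * ((MonoidAlgebra.of ℚ G b * e) * v)) g : ℚ) : ℂ)
            * Theta H lam B g⁻¹ := by
      rw [hF]
      exact congrArg (fun γ : MonoidAlgebra ℚ G =>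
        ∑ g : G, ((γ g : ℚ) : ℂ) * Theta H lam B g⁻¹) hconj'
    rw [step1, trace_swap lam hHB u _ husupp]
    have step2 : (MonoidAlgebra.of ℚ G b * e) * v * u
        = MonoidAlgebra.of ℚ G b * e := by
      rw [mul_assoc, hvu, mul_assoc, hee]
    exact congrArg (fun γ : MonoidAlgebra ℚ G =>
      ∑ g : G, ((γ g : ℚ) : ℂ) * Theta H lam B g⁻¹) step2
  -- the element w = (e : ℂG) * yy
  set yy : MonoidAlgebra ℂ G := yEl H lam B with hyydef
  set w : MonoidAlgebra ℂ G := qc G e * yy with hw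
  have hwapp : ∀ h : G, w h = ∑ a : G, ((e a : ℚ) : ℂ) * Theta H lam B (a⁻¹ * h) := by
    intro h
    rw [hw, aux_mul_apply]
    apply Finset.sum_congr rfl
    intro a _
    rw [qc_apply, hyydef, yEl_apply]
  have hwF : ∀ h : G, w h = F h⁻¹ := by
    intro h
    rw [hwapp h]
    simp only [hF]
    have hof : ∀ g : G, ((MonoidAlgebra.of ℚ G h⁻¹ * e) g : ℚ) = e (h * g) := by
      intro g
      have := MonoidAlgebra.coeff_single_mul_apply e (1 : ℚ) h⁻¹ g
      rw [one_mul, inv_inv] at this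
      exact this
    have hterm : ∀ g : G, (((MonoidAlgebra.of ℚ G h⁻¹ * e) g : ℚ) : ℂ) * Theta H lam B g⁻¹
        = ((e (h * g) : ℚ) : ℂ) * Theta H lam B g⁻¹ := fun g => by rw [hof g]
    rw [Finset.sum_congr rfl (fun g _ => hterm g)]
    rw [← Equiv.sum_comp (Equiv.mulLeft h⁻¹) fun g => ((e (h * g) : ℚ) : ℂ)
      * Theta H lam B g⁻¹]
    apply Finset.sum_congr rfl
    intro a _
    simp only [Equiv.coe_mulLeft]
    rw [mul_inv_cancel_left]
    congr 1
    group
  have hwsupp : ∀ h : G, h ∉ B → w h = 0 := by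
    intro h hh
    rw [hwapp h]
    apply Finset.sum_eq_zero
    intro a _
    by_cases ha : e a = 0
    · rw [ha]; norm_num
    · rw [Theta_of_not_mem lam (fun hc => hh (by
        have : h = a * (a⁻¹ * h) := by group
        rw [this]; exact B.mul_mem (hesupp a ha) hc)), mul_zero]
  have hwinv : ∀ g : G, w (x * g * x⁻¹) = w g := by
    intro g
    by_cases hg : g ∈ B
    · rw [hwF, hwF]
      have : (x * g * x⁻¹)⁻¹ = x * g⁻¹ * x⁻¹ := by group
      rw [this]
      exact htr g⁻¹ (B.inv_mem hg)
    · rw [hwsupp _ hg, hwsupp _ (fun hc => hg (by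
        have : g = x⁻¹ * (x * g * x⁻¹) * x := by group
        rw [this]; exact hxninv _ hc))]
  have hcommw : MonoidAlgebra.of ℂ G x * w = w * MonoidAlgebra.of ℂ G x := by
    refine MonoidAlgebra.ext (Finsupp.ext fun h => ?_)
    have h1 : (MonoidAlgebra.of ℂ G x * w) h = 1 * w (x⁻¹ * h) :=
      MonoidAlgebra.coeff_single_mul_apply w 1 x h
    have h2 : (w * MonoidAlgebra.of ℂ G x) h = w (h * x⁻¹) * 1 :=
      MonoidAlgebra.mul_single_apply w 1 x h
    rw [h1, h2, one_mul, mul_one]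
    have := hwinv (x⁻¹ * h)
    have harg : x * (x⁻¹ * h) * x⁻¹ = h * x⁻¹ := by group
    rw [harg] at this
    exact this.symm
  have honeinvC : MonoidAlgebra.of ℂ G x⁻¹ * MonoidAlgebra.of ℂ G x = 1 := by
    rw [← map_mul, inv_mul_cancel, map_one]
  have honemulC : MonoidAlgebra.of ℂ G x * MonoidAlgebra.of ℂ G x⁻¹ = 1 := by
    rw [← map_mul, mul_inv_cancel, map_one]
  have hwfix : MonoidAlgebra.of ℂ G x⁻¹ * w * MonoidAlgebra.of ℂ G x = w := by
    calc MonoidAlgebra.of ℂ G x⁻¹ * w * MonoidAlgebra.of ℂ G x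
        = MonoidAlgebra.of ℂ G x⁻¹ * (w * MonoidAlgebra.of ℂ G x) := by rw [mul_assoc]
      _ = MonoidAlgebra.of ℂ G x⁻¹ * (MonoidAlgebra.of ℂ G x * w) := by rw [← hcommw]
      _ = w := by rw [← mul_assoc, honeinvC, one_mul]
  -- w 1 ≠ 0
  have hw1 : w 1 ≠ 0 := by
    have hcalc : w 1 = (starRingEnd ℂ) (∑ a : G, ((e a : ℚ) : ℂ) * Theta H lam B a) := by
      rw [map_sum, hwapp 1]
      apply Finset.sum_congr rfl
      intro a _
      rw [mul_one, map_mul, Theta_conj_inv lam hHB]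
      congr 1
      exact (map_ratCast (starRingEnd ℂ) (e a)).symm
    have hbridge : ∑ a : G, ((e a : ℚ) : ℂ) * Theta H lam B a
        = extChar (lamChar lam B) e0 := by
      rw [sum_over_subgroup B _ (fun g hg => by
        have h0 : e g = 0 := by_contra fun hc => hg (hesupp g hc)
        rw [h0]; norm_num)]
      unfold extChar
      apply Finset.sum_congr rfl
      intro b _
      rw [hecoef b]
      congr 1
      rw [Theta, dif_pos b.2]
    rw [hcalc, hbridge]
    intro h0
    exact hext0 ((starRingEnd ℂ).injective (by rw [h0, map_zero]))
  -- final contradiction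
  set N : ℂ := (Nat.card H : ℂ) with hN
  set Y' : MonoidAlgebra ℂ G := MonoidAlgebra.of ℂ G x⁻¹ * yy * MonoidAlgebra.of ℂ G x
    with hY'
  have hzero : yy * Y' = 0 := yy_mul_conjY_eq_zero lam hSP hker hHB hxB hxn
  have hyy2 : yy * yy = N • yy := yEl_mul_yEl lam hSP hker hHB
  have hwyy : w * yy = N • w := by
    rw [hw, mul_assoc, hyy2, mul_smul_comm]
  have hfinal1 : w * Y' = N • w := by
    calc w * Y'
        = (MonoidAlgebra.of ℂ G x⁻¹ * w * MonoidAlgebra.of ℂ G x) * Y' := by rw [hwfix]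
      _ = MonoidAlgebra.of ℂ G x⁻¹ * (w * ((MonoidAlgebra.of ℂ G x *
            MonoidAlgebra.of ℂ G x⁻¹) * yy)) * MonoidAlgebra.of ℂ G x := by
          rw [hY']; noncomm_ring
      _ = MonoidAlgebra.of ℂ G x⁻¹ * (w * yy) * MonoidAlgebra.of ℂ G x := by
          rw [honemulC, one_mul]
      _ = MonoidAlgebra.of ℂ G x⁻¹ * (N • w) * MonoidAlgebra.of ℂ G x := by rw [hwyy]
      _ = N • (MonoidAlgebra.of ℂ G x⁻¹ * w * MonoidAlgebra.of ℂ G x) := by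
          rw [mul_smul_comm, smul_mul_assoc]
      _ = N • w := by rw [hwfix]
  have hfinal2 : w * Y' = 0 := by
    rw [hw, mul_assoc, hzero, mul_zero]
  rw [hfinal2] at hfinal1
  rcases smul_eq_zero.mp hfinal1.symm with h | h
  · exact cardH_ne_zero (H := H) h
  · exact hw1 (by rw [h]; rfl)

end PaperGSM
end
end
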